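/- arXiv:1101.5186 — 6 statements merged into one kernel-verified Lean document; each statement's English description precedes it below -/
import Mathlib

section
/- With notation as in the context: the set A is a subgroup of the semidirect product Ω^m ⋊ L. -/
open MulAction

section DeltaAction

variable {Λ L : Type} [Group L] [MulAction L Λ] (K : Subgroup L) [K.Normal]

/-- The action of `L` on the set `Δ` of orbits of a normal subgroup `K` on `Λ`. -/
def deltaSmul (g : L) (q : orbitRel.Quotient K Λ) : orbitRel.Quotient K Λ :=
  Quotient.map' (fun x => g • x) (by
    rintro a b ⟨k, hk⟩
    refine ⟨⟨g * k * g⁻¹, Subgroup.Normal.conj_mem ‹K.Normal› (k : L) k.2 g⟩, ?_⟩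
    show (g * (k : L) * g⁻¹) • (g • b) = g • a
    have hk' : (k : L) • b = a := hk
    rw [← hk', smul_smul, smul_smul]
    congr 1
    group) q

lemma deltaSmul_mk (g : L) (a : Λ) :
    deltaSmul K g (Quotient.mk'' a) = (Quotient.mk'' (g • a) : orbitRel.Quotient K Λ) := rfl

/-- `L` acts on the set of orbits of a normal subgroup `K`. -/
instance deltaAction : MulAction L (orbitRel.Quotient K Λ) where
  smul := deltaSmul K
  one_smul q := Quotient.inductionOn' q fun a => by
    show deltaSmul K 1 (Quotient.mk'' a) = Quotient.mk'' a
    rw [deltaSmul_mk, one_smul]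
  mul_smul g h q := Quotient.inductionOn' q fun a => by
    show deltaSmul K (g * h) (Quotient.mk'' a) = deltaSmul K g (deltaSmul K h (Quotient.mk'' a))
    rw [deltaSmul_mk, deltaSmul_mk, deltaSmul_mk, mul_smul]

end DeltaAction

section Ctx

variable (Λ L : Type) [Group L] [MulAction L Λ] (K : Subgroup L) [K.Normal]

/-- The homomorphism from `L` to the symmetric group of the orbit set `Δ`. -/
def rhoHom : L →* Equiv.Perm (orbitRel.Quotient K Λ) :=
  MulAction.toPermHom L (orbitRel.Quotient K Λ)

/-- `S`, the permutation group induced by `L` on the orbit set `Δ`. -/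
def Sgrp : Subgroup (Equiv.Perm (orbitRel.Quotient K Λ)) := (rhoHom Λ L K).range

/-- The natural projection `π : L → S`. -/
def piHom : L →* ↥(Sgrp Λ L K) := (rhoHom Λ L K).rangeRestrict

variable (lam : Λ)

/-- The orbit `δ ∈ Δ` of the point `λ`. -/
def deltaPt : orbitRel.Quotient K Λ := Quotient.mk'' lam

/-- The stabiliser `S_δ` of `δ` in `S`. -/
def Sdel : Subgroup ↥(Sgrp Λ L K) := stabilizer ↥(Sgrp Λ L K) (deltaPt Λ L K lam)

/-- The point stabiliser `L_λ`. -/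
def Llam : Subgroup L := stabilizer L lam

/-- `K_λ`, the stabiliser of `λ` in `K`. -/
def Klam : Subgroup L := K ⊓ stabilizer L lam

end Ctx

section Wr

variable {G H : Type*} [Group G] [Group H]

/-- The underlying type of the twisted product `(H → G)^m ⋊ G` used in the construction:
elements are tuples `(g, f₁, …, f_m)` with `g ∈ G` and `f_i : H → G`, multiplied by
`(g, f₁, …, f_m)(g', h₁, …, h_m) = (g g', f₁^{g'} h₁, …, f_m^{g'} h_m)`, where
`f^{g'}(x) = f(x · (p g')⁻¹)`. -/
@[ext]
structure Wr (p : G →* H) (m : ℕ) where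
  fst : G
  snd : Fin m → H → G

namespace Wr

variable {p : G →* H} {m : ℕ}

instance : One (Wr p m) := ⟨⟨1, fun _ _ => 1⟩⟩
instance : Mul (Wr p m) :=
  ⟨fun a b => ⟨a.fst * b.fst, fun i x => a.snd i (x * (p b.fst)⁻¹) * b.snd i x⟩⟩
instance : Inv (Wr p m) := ⟨fun a => ⟨a.fst⁻¹, fun i x => (a.snd i (x * p a.fst))⁻¹⟩⟩

@[simp] lemma one_fst : (1 : Wr p m).fst = 1 := rfl
@[simp] lemma one_snd (i : Fin m) (x : H) : (1 : Wr p m).snd i x = 1 := rfl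
@[simp] lemma mul_fst (a b : Wr p m) : (a * b).fst = a.fst * b.fst := rfl
@[simp] lemma mul_snd (a b : Wr p m) (i : Fin m) (x : H) :
    (a * b).snd i x = a.snd i (x * (p b.fst)⁻¹) * b.snd i x := rfl
@[simp] lemma inv_fst (a : Wr p m) : (a⁻¹).fst = a.fst⁻¹ := rfl
@[simp] lemma inv_snd (a : Wr p m) (i : Fin m) (x : H) :
    (a⁻¹).snd i x = (a.snd i (x * p a.fst))⁻¹ := rfl

instance : Group (Wr p m) where
  mul_assoc a b c := by
    refine Wr.ext (mul_assoc ..) ?_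
    funext i x
    simp [mul_assoc]
  one_mul a := by
    refine Wr.ext (one_mul _) ?_
    funext i x
    simp
  mul_one a := by
    refine Wr.ext (mul_one _) ?_
    funext i x
    simp
  inv_mul_cancel a := by
    refine Wr.ext (inv_mul_cancel _) ?_
    funext i x
    simp

end Wr

end Wr

/-- The projection `(g, f₁, …, f_m) ↦ g`. -/
def Wr.fstHom {G H : Type*} [Group G] [Group H] (p : G →* H) (m : ℕ) : Wr p m →* G where
  toFun := Wr.fst
  map_one' := rfl
  map_mul' := fun _ _ => rfl

section ASubgroup

open MulAction

variable (Λ L : Type) [Fintype Λ] [Group L] [Finite L] [MulAction L Λ]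
  (K : Subgroup L) [K.Normal] (lam : Λ)
  (τ : ↥(Sgrp Λ L K) → ↥(Sgrp Λ L K)) (m : ℕ)

/-- The subgroup `Ω^m ⋊ L` inside the twisted product: the tuples `(g, f₁, …, f_m)` where
each `f_i` lies in `Ω`, i.e. takes values in `L_λ` and is constant on the right cosets of
`S_δ` in `S`. -/
def OmegaML : Subgroup (Wr (piHom Λ L K) m) where
  carrier := {w | ∀ i, (∀ x, w.snd i x ∈ stabilizer L lam) ∧
    ∀ y ∈ Sdel Λ L K lam, ∀ x, w.snd i (y * x) = w.snd i x}
  one_mem' := fun i => ⟨fun x => Subgroup.one_mem _, fun y hy x => rfl⟩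
  mul_mem' := by
    rintro a b ha hb
    refine fun i => ⟨fun x => ?_, fun y hy x => ?_⟩
    · simp only [Wr.mul_snd]
      exact mul_mem ((ha i).1 _) ((hb i).1 x)
    · simp only [Wr.mul_snd]
      rw [mul_assoc, (ha i).2 y hy, (hb i).2 y hy]
  inv_mem' := by
    rintro a ha
    refine fun i => ⟨fun x => ?_, fun y hy x => ?_⟩
    · simp only [Wr.inv_snd]
      exact inv_mem ((ha i).1 _)
    · simp only [Wr.inv_snd]
      rw [mul_assoc, (ha i).2 y hy]

/-- The set `A`: tuples `(g, f₁, …, f_m)` with `g ∈ L`, each `f_i ∈ Ω`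
(i.e. `f_i` takes values in `L_λ` and is constant on right cosets of `S_δ`), and
`(f_i(x))^π = (x (g^π)⁻¹)^τ · g^π · (x^τ)⁻¹` for all `x ∈ S`. -/
def Aset : Set (Wr (piHom Λ L K) m) :=
  {w | (∀ i x, w.snd i x ∈ stabilizer L lam) ∧
    (∀ i, ∀ y ∈ Sdel Λ L K lam, ∀ x, w.snd i (y * x) = w.snd i x) ∧
    (∀ i x, piHom Λ L K (w.snd i x) =
      τ (x * (piHom Λ L K w.fst)⁻¹) * piHom Λ L K w.fst * (τ x)⁻¹)}

/-- `A` as a subgroup of `Ω^m ⋊ L`. -/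
def Asub : Subgroup (Wr (piHom Λ L K) m) where
  carrier := Aset Λ L K lam τ m
  one_mem' := by
    refine ⟨fun i x => ?_, fun i y hy x => rfl, fun i x => ?_⟩
    · simp only [Wr.one_snd]
      exact Subgroup.one_mem _
    · simp
  mul_mem' := by
    rintro a b ⟨ha1, ha2, ha3⟩ ⟨hb1, hb2, hb3⟩
    refine ⟨fun i x => ?_, fun i y hy x => ?_, fun i x => ?_⟩
    · simp only [Wr.mul_snd]
      exact mul_mem (ha1 i _) (hb1 i x)
    · simp only [Wr.mul_snd]
      rw [mul_assoc, ha2 i y hy, hb2 i y hy]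
    · simp only [Wr.mul_snd, Wr.mul_fst, map_mul]
      rw [ha3 i, hb3 i,
        show x * (piHom Λ L K a.fst * piHom Λ L K b.fst)⁻¹ =
          x * (piHom Λ L K b.fst)⁻¹ * (piHom Λ L K a.fst)⁻¹ from by
            rw [mul_inv_rev, ← mul_assoc]]
      group
  inv_mem' := by
    rintro a ⟨h1, h2, h3⟩
    refine ⟨fun i x => ?_, fun i y hy x => ?_, fun i x => ?_⟩
    · simp only [Wr.inv_snd]
      exact inv_mem (h1 i _)
    · simp only [Wr.inv_snd]
      rw [mul_assoc, h2 i y hy]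
    · simp only [Wr.inv_snd, Wr.inv_fst, map_inv]
      rw [h3 i (x * piHom Λ L K a.fst), mul_inv_cancel_right, inv_inv]
      group

/-- The subgroup `C = {(g, f₁, …, f_m) ∈ A | g ∈ L_λ}` of `A`. -/
def Csub : Subgroup (Wr (piHom Λ L K) m) :=
  Asub Λ L K lam τ m ⊓ Subgroup.comap (Wr.fstHom (piHom Λ L K) m) (stabilizer L lam)

end ASubgroup

/-- **Lemma.** With notation as in the construction, the set `A` is a subgroup of the
semidirect product `Ω^m ⋊ L`: it is contained in `Ω^m ⋊ L`, contains the identity, and is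
closed under multiplication and inverses. -/
theorem Aset_is_subgroup (Λ L : Type) [Fintype Λ] [Group L] [Finite L] [MulAction L Λ]
    [FaithfulSMul L Λ] [MulAction.IsPretransitive L Λ]
    (K : Subgroup L) [K.Normal] (hKint : ¬ MulAction.IsPretransitive ↥K Λ)
    (hker : (rhoHom Λ L K).ker = K) (lam : Λ)
    (T : Set ↥(Sgrp Λ L K)) (h1T : (1 : ↥(Sgrp Λ L K)) ∈ T)
    (τ : ↥(Sgrp Λ L K) → ↥(Sgrp Λ L K))
    (hτT : ∀ s, τ s ∈ T) (hτcoset : ∀ s, s * (τ s)⁻¹ ∈ Sdel Λ L K lam)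
    (hτuniq : ∀ s t, t ∈ T → s * t⁻¹ ∈ Sdel Λ L K lam → t = τ s)
    (m : ℕ) (hm : Odd m) :
    (Aset Λ L K lam τ m ⊆ (OmegaML Λ L K lam m : Set (Wr (piHom Λ L K) m))) ∧
    (1 : Wr (piHom Λ L K) m) ∈ Aset Λ L K lam τ m ∧
    (∀ a ∈ Aset Λ L K lam τ m, ∀ b ∈ Aset Λ L K lam τ m, a * b ∈ Aset Λ L K lam τ m) ∧
    (∀ a ∈ Aset Λ L K lam τ m, a⁻¹ ∈ Aset Λ L K lam τ m) := by
  refine ⟨?_, (Asub Λ L K lam τ m).one_mem,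
    fun a ha b hb => (Asub Λ L K lam τ m).mul_mem ha hb,
    fun a ha => (Asub Λ L K lam τ m).inv_mem ha⟩
  rintro w ⟨h1, h2, _⟩ i
  exact ⟨h1 i, h2 i⟩
end

section
/- With notation as in the context: the map φ : A → L given by (g,f_1,…,f_m)^φ = g is a surjective group homomorphism. -/
open MulAction

/-- **Lemma.** With notation as in the construction, the map `φ : A → L`,
`(g, f₁, …, f_m) ↦ g`, is a surjective group homomorphism. -/
theorem phi_surjective (Λ L : Type) [Fintype Λ] [Group L] [Finite L] [MulAction L Λ]
    [FaithfulSMul L Λ] [MulAction.IsPretransitive L Λ]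
    (K : Subgroup L) [K.Normal] (hKint : ¬ MulAction.IsPretransitive ↥K Λ)
    (hker : (rhoHom Λ L K).ker = K) (lam : Λ)
    (T : Set ↥(Sgrp Λ L K)) (h1T : (1 : ↥(Sgrp Λ L K)) ∈ T)
    (τ : ↥(Sgrp Λ L K) → ↥(Sgrp Λ L K))
    (hτT : ∀ s, τ s ∈ T) (hτcoset : ∀ s, s * (τ s)⁻¹ ∈ Sdel Λ L K lam)
    (hτuniq : ∀ s t, t ∈ T → s * t⁻¹ ∈ Sdel Λ L K lam → t = τ s)
    (m : ℕ) (hm : Odd m) :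
    Function.Surjective
      ((Wr.fstHom (piHom Λ L K) m).comp (Asub Λ L K lam τ m).subtype) := by
  intro g
  set p := piHom Λ L K with hp
  -- τ is constant on right cosets of S_δ
  have htau : ∀ y ∈ Sdel Λ L K lam, ∀ x, τ (y * x) = τ x := by
    intro y hy x
    refine (hτuniq (y * x) (τ x) (hτT x) ?_).symm
    have : y * x * (τ x)⁻¹ = y * (x * (τ x)⁻¹) := by group
    rw [this]
    exact mul_mem hy (hτcoset x)
  -- the target value lies in S_δ
  have hsd : ∀ x : ↥(Sgrp Λ L K),
      τ (x * (p g)⁻¹) * p g * (τ x)⁻¹ ∈ Sdel Λ L K lam := by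
    intro x
    have key : τ (x * (p g)⁻¹) * p g * (τ x)⁻¹ =
        ((x * (p g)⁻¹) * (τ (x * (p g)⁻¹))⁻¹)⁻¹ * (x * (τ x)⁻¹) := by group
    rw [key]
    exact mul_mem (inv_mem (hτcoset _)) (hτcoset _)
  -- every element of S_δ lifts to L_λ
  have hlift : ∀ s : ↥(Sdel Λ L K lam),
      ∃ h : L, h ∈ stabilizer L lam ∧ p h = (s : ↥(Sgrp Λ L K)) := by
    rintro ⟨s, hs⟩
    obtain ⟨h, hh'⟩ := (rhoHom Λ L K).rangeRestrict_surjective s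
    have hh : p h = s := hh'
    have hsδ : (s : Equiv.Perm (orbitRel.Quotient K Λ)) (deltaPt Λ L K lam) =
        deltaPt Λ L K lam := hs
    have hρ : rhoHom Λ L K h (deltaPt Λ L K lam) = deltaPt Λ L K lam := by
      have : ((p h : ↥(Sgrp Λ L K)) : Equiv.Perm (orbitRel.Quotient K Λ)) =
          rhoHom Λ L K h := rfl
      rw [← this, hh]
      exact hsδ
    have horb : (Quotient.mk'' (h • lam) : orbitRel.Quotient K Λ) = Quotient.mk'' lam := hρ
    have : h • lam ∈ orbit (↥K) lam := by
      rw [← MulAction.orbitRel_apply (G := ↥K)]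
      exact Quotient.eq''.mp horb
    obtain ⟨k, hk⟩ := this
    refine ⟨(k : L)⁻¹ * h, ?_, ?_⟩
    · show ((k : L)⁻¹ * h) • lam = lam
      have hk' : (k : L) • lam = h • lam := hk
      rw [mul_smul, ← hk', ← mul_smul, inv_mul_cancel, one_smul]
    · have hkK : (k : L) ∈ (rhoHom Λ L K).ker := by rw [hker]; exact k.2
      have hkker : (k : L) ∈ p.ker := by
        rw [hp]
        show (k : L) ∈ (rhoHom Λ L K).rangeRestrict.ker
        rw [MonoidHom.ker_rangeRestrict]
        exact hkK
      rw [map_mul, map_inv, hkker, inv_one, one_mul]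
      exact hh
  choose lift hlift1 hlift2 using hlift
  -- the function F : S → L_λ
  set F : ↥(Sgrp Λ L K) → L := fun x => lift ⟨τ (x * (p g)⁻¹) * p g * (τ x)⁻¹, hsd x⟩
    with hF
  have hFcoset : ∀ y ∈ Sdel Λ L K lam, ∀ x, F (y * x) = F x := by
    intro y hy x
    have h1 : τ (y * x * (p g)⁻¹) = τ (x * (p g)⁻¹) := by
      have : y * x * (p g)⁻¹ = y * (x * (p g)⁻¹) := by group
      rw [this, htau y hy]
    have h2 : τ (y * x) = τ x := htau y hy x
    simp only [hF, h1, h2]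
  refine ⟨⟨⟨g, fun _ x => F x⟩, ?_⟩, rfl⟩
  refine ⟨fun i x => hlift1 _, fun i y hy x => hFcoset y hy x, fun i x => ?_⟩
  exact hlift2 ⟨τ (x * (p g)⁻¹) * p g * (τ x)⁻¹, hsd x⟩
end

section
/- With notation as in the context: M is the core of C in A (the largest normal subgroup of A contained in C), M is isomorphic to the direct power K_λ^{|Δ|·m}, and the action of A on the right cosets of C in A is permutation isomorphic to the action of L on Λ. -/
open MulAction

section Helpers
open MulAction
set_option linter.unusedSectionVars false
variable (Λ L : Type) [Fintype Λ] [Group L] [Finite L] [MulAction L Λ]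
  (K : Subgroup L) [K.Normal]

lemma ker_piHom (hker : (rhoHom Λ L K).ker = K) : (piHom Λ L K).ker = K := by
  exact (MonoidHom.ker_rangeRestrict (rhoHom Λ L K)).trans hker

example (g : L) (q : orbitRel.Quotient K Λ) : (piHom Λ L K g) • q = g • q := rfl

example (g : L) (a : Λ) : g • (Quotient.mk'' a : orbitRel.Quotient K Λ) = Quotient.mk'' (g • a) := rfl

lemma sdel_surj (hker : (rhoHom Λ L K).ker = K) (lam : Λ) (s : ↥(Sgrp Λ L K))
    (hs : s ∈ Sdel Λ L K lam) : ∃ g, g ∈ stabilizer L lam ∧ piHom Λ L K g = s := by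
  obtain ⟨g, hg⟩ := s.2
  have hps : piHom Λ L K g = s := Subtype.ext hg
  have hδ : (Quotient.mk'' (g • lam) : orbitRel.Quotient K Λ) = Quotient.mk'' lam := by
    have := (mem_stabilizer_iff.mp hs)
    rw [← hps] at this
    exact this
  have horb : g • lam ∈ orbit K lam := by
    rw [← MulAction.orbitRel_apply]
    exact Quotient.exact' hδ
  obtain ⟨k, hk⟩ := horb
  refine ⟨(k : L)⁻¹ * g, ?_, ?_⟩
  · have hk' : (k : L) • lam = g • lam := hk
    rw [mem_stabilizer_iff, mul_smul, ← hk', inv_smul_smul]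
  · rw [map_mul, map_inv]
    have : piHom Λ L K (k : L) = 1 := by
      rw [← MonoidHom.mem_ker, ker_piHom Λ L K hker]; exact k.2
    rw [this, inv_one, one_mul, hps]


section Tau
variable (lam : Λ) (T : Set ↥(Sgrp Λ L K)) (τ : ↥(Sgrp Λ L K) → ↥(Sgrp Λ L K))
  (hτT : ∀ s, τ s ∈ T) (hτcoset : ∀ s, s * (τ s)⁻¹ ∈ Sdel Λ L K lam)
  (hτuniq : ∀ s t, t ∈ T → s * t⁻¹ ∈ Sdel Λ L K lam → t = τ s)

include hτT hτcoset hτuniq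

lemma tau_idem (t : ↥(Sgrp Λ L K)) (ht : t ∈ T) : τ t = t :=
  (hτuniq t t ht (by rw [mul_inv_cancel]; exact (Sdel Λ L K lam).one_mem)).symm

lemma tau_left {y : ↥(Sgrp Λ L K)} (hy : y ∈ Sdel Λ L K lam) (x : ↥(Sgrp Λ L K)) :
    τ (y * x) = τ x :=
  (hτuniq (y * x) (τ x) (hτT x) (by
    rw [mul_assoc]; exact mul_mem hy (hτcoset x))).symm

omit hτT hτuniq in
lemma sigma_mem (g t : ↥(Sgrp Λ L K)) :
    τ (t * g⁻¹) * g * t⁻¹ ∈ Sdel Λ L K lam := by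
  have h : τ (t * g⁻¹) * g * t⁻¹ = (t * g⁻¹ * (τ (t * g⁻¹))⁻¹)⁻¹ := by group
  rw [h]
  exact inv_mem (hτcoset (t * g⁻¹))

lemma tau_tau (g x : ↥(Sgrp Λ L K)) : τ (τ x * g⁻¹) = τ (x * g⁻¹) := by
  have h : x * g⁻¹ = (x * (τ x)⁻¹) * (τ x * g⁻¹) := by group
  rw [h, tau_left Λ L K lam T τ hτT hτcoset hτuniq (hτcoset x)]

lemma phi_surj (hker : (rhoHom Λ L K).ker = K) (m : ℕ) (g : L) :
    ∃ w ∈ Asub Λ L K lam τ m, w.fst = g := by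
  choose u hu1 hu2 using fun σ : ↥(Sdel Λ L K lam) =>
    sdel_surj Λ L K hker lam σ.1 σ.2
  refine ⟨⟨g, fun i x => u ⟨τ (τ x * (piHom Λ L K g)⁻¹) * piHom Λ L K g * (τ x)⁻¹,
    sigma_mem Λ L K lam τ hτcoset (piHom Λ L K g) (τ x)⟩⟩, ⟨?_, ?_, ?_⟩, rfl⟩
  · exact fun i x => hu1 _
  · intro i y hy x
    have h := tau_left Λ L K lam T τ hτT hτcoset hτuniq hy x
    simp only [h]
  · intro i x
    simp only [hu2]
    rw [tau_tau Λ L K lam T τ hτT hτcoset hτuniq]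


lemma T_equiv_delta [IsPretransitive L Λ] :
    Nonempty (↥T ≃ orbitRel.Quotient K Λ) := by
  refine ⟨Equiv.ofBijective (fun t => (t.1)⁻¹ • deltaPt Λ L K lam) ⟨?_, ?_⟩⟩
  · rintro ⟨t₁, ht₁⟩ ⟨t₂, ht₂⟩ h
    simp only at h
    have hmem : t₁ * t₂⁻¹ ∈ Sdel Λ L K lam := by
      refine mem_stabilizer_iff.mpr ?_
      rw [mul_smul, ← h, smul_inv_smul]
    have h2 := hτuniq t₁ t₂ ht₂ hmem
    rw [tau_idem Λ L K lam T τ hτT hτcoset hτuniq t₁ ht₁] at h2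
    exact Subtype.ext h2.symm
  · intro q
    obtain ⟨μ, hμ⟩ := Quotient.exists_rep q
    obtain ⟨g, hg⟩ := MulAction.exists_smul_eq L lam μ
    refine ⟨⟨τ (piHom Λ L K g)⁻¹, hτT _⟩, ?_⟩
    have h1 : ((piHom Λ L K g)⁻¹ * (τ (piHom Λ L K g)⁻¹)⁻¹) • deltaPt Λ L K lam
        = deltaPt Λ L K lam := mem_stabilizer_iff.mp (hτcoset (piHom Λ L K g)⁻¹)
    rw [mul_smul] at h1
    have h2 := congrArg (fun x => piHom Λ L K g • x) h1
    simp only [smul_inv_smul] at h2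
    show (τ (piHom Λ L K g)⁻¹)⁻¹ • deltaPt Λ L K lam = q
    rw [h2]
    rw [show (piHom Λ L K g) • deltaPt Λ L K lam
      = (Quotient.mk'' (g • lam) : orbitRel.Quotient K Λ) from rfl, hg]
    exact hμ

lemma M_equiv (hker : (rhoHom Λ L K).ker = K) (m : ℕ) :
    Nonempty
      (↥(MonoidHom.ker ((Wr.fstHom (piHom Λ L K) m).comp (Asub Λ L K lam τ m).subtype)) ≃*
        (Fin m × ↥T → ↥(K ⊓ stabilizer L lam))) := by
  have hKer : (piHom Λ L K).ker = K := ker_piHom Λ L K hker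
  have memKL : ∀ (a : ↥(MonoidHom.ker ((Wr.fstHom (piHom Λ L K) m).comp
        (Asub Λ L K lam τ m).subtype))) (i : Fin m) (x : ↥(Sgrp Λ L K)),
      (a.1.1).snd i x ∈ K ⊓ stabilizer L lam := by
    intro a i x
    obtain ⟨h1, h2, h3⟩ := a.1.2
    have hfst : (a.1.1).fst = 1 := a.2
    refine Subgroup.mem_inf.mpr ⟨?_, h1 i x⟩
    have h5 : (a.1.1).snd i x ∈ (piHom Λ L K).ker := by
      rw [MonoidHom.mem_ker]
      have h4 := h3 i x
      rw [hfst] at h4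
      simpa using h4
    rwa [hKer] at h5
  refine ⟨MulEquiv.mk (Equiv.mk
    (fun a it => ⟨(a.1.1).snd it.1 it.2.1, memKL a it.1 it.2.1⟩)
    (fun F => ⟨⟨⟨1, fun i x => (F (i, ⟨τ x, hτT x⟩)).1⟩, ?_⟩, ?_⟩)
    ?_ ?_) ?_⟩
  · refine ⟨fun i x => (Subgroup.mem_inf.mp (F (i, ⟨τ x, hτT x⟩)).2).2,
      fun i y hy x => ?_, fun i x => ?_⟩
    · have h := tau_left Λ L K lam T τ hτT hτcoset hτuniq hy x
      simp only [h]
    · have hk1 : piHom Λ L K (F (i, ⟨τ x, hτT x⟩)).1 = 1 := by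
        rw [← MonoidHom.mem_ker, hKer]
        exact (Subgroup.mem_inf.mp (F (i, ⟨τ x, hτT x⟩)).2).1
      simp [hk1]
  · exact MonoidHom.mem_ker.mpr rfl
  · intro a
    refine Subtype.ext (Subtype.ext (Wr.ext ?_ ?_))
    · exact (a.2 : (a.1.1).fst = 1).symm
    · funext i x
      obtain ⟨h1, h2, h3⟩ := a.1.2
      show (a.1.1).snd i (τ x) = (a.1.1).snd i x
      conv_rhs => rw [show x = (x * (τ x)⁻¹) * τ x by group]
      rw [h2 i (x * (τ x)⁻¹) (hτcoset x) (τ x)]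
  · intro F
    funext it
    obtain ⟨i, t, ht⟩ := it
    refine Subtype.ext ?_
    show (F (i, ⟨τ t, hτT t⟩)).1 = (F (i, ⟨t, ht⟩)).1
    rw [show (⟨τ t, hτT t⟩ : ↥T) = ⟨t, ht⟩ from
      Subtype.ext (tau_idem Λ L K lam T τ hτT hτcoset hτuniq t ht)]
  · intro a b
    funext it
    refine Subtype.ext ?_
    show ((a * b).1.1).snd it.1 it.2.1 = (a.1.1).snd it.1 it.2.1 * (b.1.1).snd it.1 it.2.1
    have hb : (b.1.1).fst = 1 := b.2
    rw [show ((a * b).1.1 : Wr (piHom Λ L K) m) = a.1.1 * b.1.1 from rfl, Wr.mul_snd, hb]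
    simp

end Tau
end Helpers

/-- **Lemma.** With notation as in the construction, let `φ : A → L` be the projection,
`M = ker φ` and `C = {(g, f₁, …, f_m) ∈ A | g ∈ L_λ}`. Then `M` is the core of `C` in
`A`, `M ≅ K_λ^{|Δ|·m}`, and the action of `A` on the cosets of `C` is permutation
isomorphic to the action of `L` on `Λ` (via the bijection intertwining the `A`-action and
the `L`-action along `φ`). -/
theorem kernel_is_core_and_coset_action (Λ L : Type) [Fintype Λ] [Group L] [Finite L]
    [MulAction L Λ] [FaithfulSMul L Λ] [MulAction.IsPretransitive L Λ]
    (K : Subgroup L) [K.Normal] (hKint : ¬ MulAction.IsPretransitive ↥K Λ)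
    (hker : (rhoHom Λ L K).ker = K) (lam : Λ)
    (T : Set ↥(Sgrp Λ L K)) (h1T : (1 : ↥(Sgrp Λ L K)) ∈ T)
    (τ : ↥(Sgrp Λ L K) → ↥(Sgrp Λ L K))
    (hτT : ∀ s, τ s ∈ T) (hτcoset : ∀ s, s * (τ s)⁻¹ ∈ Sdel Λ L K lam)
    (hτuniq : ∀ s t, t ∈ T → s * t⁻¹ ∈ Sdel Λ L K lam → t = τ s)
    (m : ℕ) (hm : Odd m) :
    MonoidHom.ker ((Wr.fstHom (piHom Λ L K) m).comp (Asub Λ L K lam τ m).subtype) =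
      (Subgroup.comap ((Wr.fstHom (piHom Λ L K) m).comp (Asub Λ L K lam τ m).subtype)
        (MulAction.stabilizer L lam)).normalCore ∧
    Nonempty
      (↥(MonoidHom.ker ((Wr.fstHom (piHom Λ L K) m).comp (Asub Λ L K lam τ m).subtype)) ≃*
        (Fin (Nat.card (MulAction.orbitRel.Quotient K Λ) * m) →
          ↥(K ⊓ MulAction.stabilizer L lam))) ∧
    ∃ e : (↥(Asub Λ L K lam τ m) ⧸
        Subgroup.comap ((Wr.fstHom (piHom Λ L K) m).comp (Asub Λ L K lam τ m).subtype)
          (MulAction.stabilizer L lam)) ≃ Λ,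
      ∀ (a : ↥(Asub Λ L K lam τ m))
        (x : ↥(Asub Λ L K lam τ m) ⧸
          Subgroup.comap ((Wr.fstHom (piHom Λ L K) m).comp (Asub Λ L K lam τ m).subtype)
            (MulAction.stabilizer L lam)),
        e (a • x) =
          ((Wr.fstHom (piHom Λ L K) m).comp (Asub Λ L K lam τ m).subtype) a • e x := by
  refine ⟨?_, ?_, ?_⟩
  · ext a
    simp only [MonoidHom.mem_ker]
    constructor
    · intro ha b
      show _ ∈ Subgroup.comap _ _
      simp only [Subgroup.mem_comap, map_mul, map_inv, ha, mul_one, mul_inv_cancel]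
      exact (MulAction.stabilizer L lam).one_mem
    · intro h
      refine FaithfulSMul.eq_of_smul_eq_smul (fun μ : Λ => ?_)
      rw [one_smul]
      obtain ⟨g, hg⟩ := MulAction.exists_smul_eq L μ lam
      obtain ⟨w, hwA, hwfst⟩ := phi_surj Λ L K lam T τ hτT hτcoset hτuniq hker m g
      have hb := h ⟨w, hwA⟩
      simp only [Subgroup.mem_comap, map_mul, map_inv, MulAction.mem_stabilizer_iff] at hb
      rw [show ((Wr.fstHom (piHom Λ L K) m).comp (Asub Λ L K lam τ m).subtype) ⟨w, hwA⟩ = g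
        from hwfst] at hb
      have hμ : g⁻¹ • lam = μ := by rw [← hg, inv_smul_smul]
      rw [mul_smul, mul_smul, hμ] at hb
      exact smul_left_cancel g (hb.trans hg.symm)
  · obtain ⟨eT⟩ := T_equiv_delta Λ L K lam T τ hτT hτcoset hτuniq
    obtain ⟨E⟩ := M_equiv Λ L K lam T τ hτT hτcoset hτuniq hker m
    have hcard : Nat.card (Fin m × ↥T) = Nat.card (MulAction.orbitRel.Quotient K Λ) * m := by
      rw [Nat.card_prod, Nat.card_congr eT, mul_comm]
      congr 1
      simp [Nat.card_eq_fintype_card]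
    exact ⟨E.trans (MulEquiv.arrowCongr (Finite.equivFinOfCardEq hcard) (MulEquiv.refl _))⟩
  · refine ⟨Equiv.ofBijective (fun x => Quotient.liftOn' x
        (fun a => ((Wr.fstHom (piHom Λ L K) m).comp (Asub Λ L K lam τ m).subtype) a • lam)
        (fun a b h => ?_)) ⟨?_, ?_⟩, ?_⟩
    · have h' := QuotientGroup.leftRel_apply.mp h
      rw [Subgroup.mem_comap] at h'
      have h2 := MulAction.mem_stabilizer_iff.mp h'
      rw [map_mul, map_inv, mul_smul] at h2
      exact (inv_smul_eq_iff.mp h2).symm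
    · intro x y
      induction' x using Quotient.inductionOn' with a
      induction' y using Quotient.inductionOn' with b
      intro h
      apply Quotient.sound'
      rw [QuotientGroup.leftRel_apply, Subgroup.mem_comap]
      refine MulAction.mem_stabilizer_iff.mpr ?_
      rw [map_mul, map_inv, mul_smul]
      have h' : ((Wr.fstHom (piHom Λ L K) m).comp (Asub Λ L K lam τ m).subtype) a • lam =
          ((Wr.fstHom (piHom Λ L K) m).comp (Asub Λ L K lam τ m).subtype) b • lam := h
      rw [← h', inv_smul_smul]
    · intro μ
      obtain ⟨g, hg⟩ := MulAction.exists_smul_eq L lam μ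
      obtain ⟨w, hwA, hwfst⟩ := phi_surj Λ L K lam T τ hτT hτcoset hτuniq hker m g
      refine ⟨Quotient.mk'' ⟨w, hwA⟩, ?_⟩
      show ((Wr.fstHom (piHom Λ L K) m).comp (Asub Λ L K lam τ m).subtype) ⟨w, hwA⟩ • lam = μ
      rw [show ((Wr.fstHom (piHom Λ L K) m).comp (Asub Λ L K lam τ m).subtype) ⟨w, hwA⟩ = g
        from hwfst, hg]
    · intro a x
      induction' x using Quotient.inductionOn' with b
      show ((Wr.fstHom (piHom Λ L K) m).comp (Asub Λ L K lam τ m).subtype) (a * b) • lam =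
        ((Wr.fstHom (piHom Λ L K) m).comp (Asub Λ L K lam τ m).subtype) a •
        (((Wr.fstHom (piHom Λ L K) m).comp (Asub Λ L K lam τ m).subtype) b • lam)
      rw [map_mul, mul_smul]
end

section
/- With notation as in the context: if N is a subgroup of C that is normal in A and invariant under ι (equivalently, normal in B = C ⋊ ⟨ι⟩), then N = 1. -/
open MulAction

section Iota

open MulAction

variable (Λ L : Type) [Fintype Λ] [Group L] [Finite L] [MulAction L Λ]
  (K : Subgroup L) [K.Normal] (lam : Λ) (m : ℕ)

open scoped Classical in
/-- The map `ι` on `C`: for `c = (g, f₁, …, f_m)`, `c^ι = (f₁(1), f₁^{ι₁,c}, …, f_m^{ι_m,c})`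
defined case-by-case as in the construction (indices are shifted by one: the component of
index `i : Fin m` is `f_{i+1}` in the notation of the paper). -/
noncomputable def iotaW (hm0 : 0 < m) (w : Wr (piHom Λ L K) m) : Wr (piHom Λ L K) m :=
  ⟨w.snd ⟨0, hm0⟩ 1, fun i x =>
    if x ∈ Sdel Λ L K lam then
      if i.val = 0 then w.fst
      else if i.val % 2 = 1 then (if h : i.val + 1 < m then w.snd ⟨i.val + 1, h⟩ x else 1)
      else (if h : i.val - 1 < m then w.snd ⟨i.val - 1, h⟩ x else 1)
    else
      if i.val % 2 = 1 then (if h : i.val - 1 < m then w.snd ⟨i.val - 1, h⟩ x else 1)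
      else if i.val = m - 1 then w.snd i x
      else (if h : i.val + 1 < m then w.snd ⟨i.val + 1, h⟩ x else 1)⟩

end Iota

/-- **Lemma.** With notation as in the construction, if `N` is a subgroup of `C` which is
normal in `A` and invariant under `ι` (equivalently, normal in `B = C ⋊ ⟨ι⟩`), then
`N = 1`. -/
theorem iota_invariant_normal_subgroup_trivial (Λ L : Type) [Fintype Λ] [Group L]
    [Finite L] [MulAction L Λ] [FaithfulSMul L Λ] [MulAction.IsPretransitive L Λ]
    (K : Subgroup L) [K.Normal] (hKint : ¬ MulAction.IsPretransitive ↥K Λ)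
    (hker : (rhoHom Λ L K).ker = K) (lam : Λ)
    (T : Set ↥(Sgrp Λ L K)) (h1T : (1 : ↥(Sgrp Λ L K)) ∈ T)
    (τ : ↥(Sgrp Λ L K) → ↥(Sgrp Λ L K))
    (hτT : ∀ s, τ s ∈ T) (hτcoset : ∀ s, s * (τ s)⁻¹ ∈ Sdel Λ L K lam)
    (hτuniq : ∀ s t, t ∈ T → s * t⁻¹ ∈ Sdel Λ L K lam → t = τ s)
    (m : ℕ) (hm : Odd m) (hm0 : 0 < m)
    (N : Subgroup (Wr (piHom Λ L K) m))
    (hNC : N ≤ Csub Λ L K lam τ m)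
    (hNnormal : ∀ a ∈ Asub Λ L K lam τ m, ∀ n ∈ N, a⁻¹ * n * a ∈ N)
    (hNiota : ∀ n ∈ N, iotaW Λ L K lam m hm0 n ∈ N) :
    N = ⊥ := by
  classical
  have hsurj : ∀ s : ↥(Sgrp Λ L K), ∃ h : L, piHom Λ L K h = s := by
    rintro ⟨s, h, rfl⟩; exact ⟨h, rfl⟩
  have hkerK : ∀ k : L, k ∈ K → piHom Λ L K k = 1 := by
    intro k hk; rw [← hker] at hk; exact Subtype.ext hk
  have hmemSdel : ∀ g : L, piHom Λ L K g ∈ Sdel Λ L K lam ↔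
      (Quotient.mk'' (g • lam) : orbitRel.Quotient K Λ) = Quotient.mk'' lam :=
    fun g => Iff.rfl
  -- a section of `π` over `S_δ`, with values in `L_λ`
  have hsec : ∀ s : ↥(Sgrp Λ L K), ∃ l : L,
      s ∈ Sdel Λ L K lam → l ∈ MulAction.stabilizer L lam ∧ piHom Λ L K l = s := by
    intro s
    by_cases hs : s ∈ Sdel Λ L K lam
    · obtain ⟨h, rfl⟩ := hsurj s
      have h1 : (Quotient.mk'' (h • lam) : orbitRel.Quotient K Λ) = Quotient.mk'' lam :=
        (hmemSdel h).1 hs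
      have h2 : h • lam ∈ MulAction.orbit (↥K) lam := Quotient.eq''.mp h1
      obtain ⟨k, hk⟩ := h2
      have hk' : (k : L) • lam = h • lam := hk
      refine ⟨(k : L)⁻¹ * h, fun _ => ⟨?_, ?_⟩⟩
      · show ((k : L)⁻¹ * h) • lam = lam
        rw [mul_smul, ← hk', inv_smul_smul]
      · rw [map_mul, map_inv, hkerK _ k.2, inv_one, one_mul]
    · exact ⟨1, fun h => absurd h hs⟩
  choose ℓ hℓ using hsec
  have hτmul : ∀ y ∈ Sdel Λ L K lam, ∀ s, τ (y * s) = τ s := by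
    intro y hy s
    refine (hτuniq (y * s) (τ s) (hτT s) ?_).symm
    rw [mul_assoc]
    exact mul_mem hy (hτcoset s)
  have hτSdel : ∀ (s x : ↥(Sgrp Λ L K)), τ (x * s⁻¹) * s * (τ x)⁻¹ ∈ Sdel Λ L K lam := by
    intro s x
    have e : τ (x * s⁻¹) * s * (τ x)⁻¹ =
        (τ (x * s⁻¹) * (x * s⁻¹)⁻¹) * (x * (τ x)⁻¹) := by group
    rw [e]
    refine mul_mem ?_ (hτcoset x)
    have h1 := inv_mem (hτcoset (x * s⁻¹))
    rwa [mul_inv_rev, inv_inv] at h1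
  -- elements of `A` with prescribed first coordinate
  have hAex : ∀ h : L, ∃ a ∈ Asub Λ L K lam τ m, a.fst = h := by
    intro h
    refine ⟨⟨h, fun _ x => ℓ (τ (x * (piHom Λ L K h)⁻¹) * piHom Λ L K h * (τ x)⁻¹)⟩,
      ⟨?_, ?_, ?_⟩, rfl⟩
    · intro i x
      exact (hℓ _ (hτSdel (piHom Λ L K h) x)).1
    · intro i y hy x
      show ℓ _ = ℓ _
      have e1 : y * x * (piHom Λ L K h)⁻¹ = y * (x * (piHom Λ L K h)⁻¹) := by
        rw [mul_assoc]
      rw [e1, hτmul y hy, hτmul y hy]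
    · intro i x
      exact (hℓ _ (hτSdel (piHom Λ L K h) x)).2
  have hNmem : ∀ n ∈ N, n.fst ∈ MulAction.stabilizer L lam := by
    intro n hn
    exact (Subgroup.mem_inf.mp (hNC hn)).2
  -- conjugation formula
  have hconj : ∀ (a n : Wr (piHom Λ L K) m), n.fst = 1 → ∀ (i : Fin m) (x : ↥(Sgrp Λ L K)),
      (a⁻¹ * n * a).snd i x =
        (a.snd i x)⁻¹ * n.snd i (x * (piHom Λ L K a.fst)⁻¹) * a.snd i x := by
    intro a n hn i x
    simp [hn, mul_assoc]
  -- Claim A: the first coordinate of every element of N is trivial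
  have hfst1 : ∀ n ∈ N, n.fst = 1 := by
    intro n hn
    refine eq_of_smul_eq_smul (α := Λ) fun μ => ?_
    obtain ⟨h, hh⟩ := MulAction.exists_smul_eq L lam μ
    obtain ⟨a, haA, haf⟩ := hAex h
    have h2 := hNnormal a haA n hn
    have h3 : (a⁻¹ * n * a).fst ∈ MulAction.stabilizer L lam := hNmem _ h2
    simp only [Wr.mul_fst, Wr.inv_fst] at h3
    rw [MulAction.mem_stabilizer_iff, haf] at h3
    rw [← hh, one_smul]
    have e : n.fst * h = h * (h⁻¹ * n.fst * h) := by group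
    rw [← mul_smul, e, mul_smul, h3]
  have hE : ∀ n ∈ N, n.snd ⟨0, hm0⟩ 1 = 1 := fun n hn => hfst1 _ (hNiota n hn)
  -- extension: a coordinate trivial at one point is trivial everywhere
  have hext : ∀ (i : Fin m) (x₀ : ↥(Sgrp Λ L K)), (∀ n ∈ N, n.snd i x₀ = 1) →
      ∀ n ∈ N, ∀ y, n.snd i y = 1 := by
    intro i x₀ hbase n hn y
    obtain ⟨h, hh⟩ := hsurj (y⁻¹ * x₀)
    obtain ⟨a, haA, haf⟩ := hAex h
    have h2 := hNnormal a haA n hn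
    have h3 := hbase _ h2
    rw [hconj a n (hfst1 n hn) i x₀, haf, hh] at h3
    have e : x₀ * (y⁻¹ * x₀)⁻¹ = y := by group
    rw [e] at h3
    calc n.snd i y
        = a.snd i x₀ * ((a.snd i x₀)⁻¹ * n.snd i y * a.snd i x₀) * (a.snd i x₀)⁻¹ := by
          group
      _ = 1 := by rw [h3]; group
  -- there is an element of S outside S_δ
  have hSout : ∃ s : ↥(Sgrp Λ L K), s ∉ Sdel Λ L K lam := by
    by_contra hcon
    push_neg at hcon
    apply hKint
    constructor
    intro a b
    obtain ⟨h₁, e₁⟩ := MulAction.exists_smul_eq L lam a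
    obtain ⟨h₂, e₂⟩ := MulAction.exists_smul_eq L lam b
    have m₁ : h₁ • lam ∈ MulAction.orbit (↥K) lam :=
      Quotient.eq''.mp ((hmemSdel h₁).1 (hcon _))
    have m₂ : h₂ • lam ∈ MulAction.orbit (↥K) lam :=
      Quotient.eq''.mp ((hmemSdel h₂).1 (hcon _))
    obtain ⟨k₁, hk₁⟩ := m₁
    obtain ⟨k₂, hk₂⟩ := m₂
    refine ⟨k₂ * k₁⁻¹, ?_⟩
    rw [← e₁, ← e₂, ← hk₁, ← hk₂, mul_smul, inv_smul_smul]
  -- main induction on the index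
  have main : ∀ i : ℕ, ∀ hi : i < m, ∀ n ∈ N, ∀ x, n.snd ⟨i, hi⟩ x = 1 := by
    intro i
    induction i with
    | zero => exact fun hi => hext ⟨0, hi⟩ 1 (fun n hn => hE n hn)
    | succ i ih =>
      intro hi
      have hi' : i < m := Nat.lt_of_succ_lt hi
      rcases Nat.even_or_odd i with he | ho
      · obtain ⟨x₀, hx₀⟩ := hSout
        refine hext ⟨i + 1, hi⟩ x₀ ?_
        intro n hn
        have h1 := ih hi' _ (hNiota n hn) x₀
        have h2 : i % 2 ≠ 1 := by
          have := Nat.even_iff.mp he; omega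
        have h3 : i ≠ m - 1 := by omega
        have heq : (iotaW Λ L K lam m hm0 n).snd ⟨i, hi'⟩ x₀ = n.snd ⟨i + 1, hi⟩ x₀ := by
          show (if x₀ ∈ Sdel Λ L K lam then _ else _) = _
          rw [if_neg hx₀, if_neg h2, if_neg h3, dif_pos hi]
        rwa [heq] at h1
      · refine hext ⟨i + 1, hi⟩ 1 ?_
        intro n hn
        have h1 := ih hi' _ (hNiota n hn) 1
        have h2 : i % 2 = 1 := Nat.odd_iff.mp ho
        have h0 : i ≠ 0 := by omega
        have heq : (iotaW Λ L K lam m hm0 n).snd ⟨i, hi'⟩ 1 = n.snd ⟨i + 1, hi⟩ 1 := by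
          show (if (1 : ↥(Sgrp Λ L K)) ∈ Sdel Λ L K lam then _ else _) = _
          rw [if_pos (one_mem _), if_neg h0, if_pos h2, dif_pos hi]
        rwa [heq] at h1
  rw [eq_bot_iff]
  intro n hn
  rw [Subgroup.mem_bot]
  exact Wr.ext (hfst1 n hn)
    (funext fun i => funext fun x => main i.1 i.2 n hn x)
end

section
/- Let A, B and C be finite groups with C = A ∩ B (that is, C embeds as a subgroup of both A and B, with the two copies intersecting in C inside the amalgam) and |B : C| = 2. Assume that the trivial group is the only subgroup of C that is normal both in A and in B. Then there exists a finite group Ḡ and a finite connected Ḡ-arc-transitive graph Γ such that the stabiliser Ḡ_v of a vertex v of Γ is isomorphic to A, and the action of Ḡ_v on the neighbourhood Γ(v) is permutation isomorphic to the action of A on the right cosets of C in A. -/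
/-- A pair `(Γ, G)`: a finite connected simple graph `Γ` together with a group `G` of
automorphisms of `Γ` acting transitively on the vertices. -/
structure VTPair where
  /-- the vertex set -/
  V : Type
  /-- the graph is finite -/
  fintypeV : Fintype V
  /-- the graph -/
  Γ : SimpleGraph V
  /-- the graph is connected -/
  conn : Γ.Connected
  /-- the group, as a group of permutations of the vertices -/
  G : Subgroup (Equiv.Perm V)
  /-- every element of `G` is an automorphism of `Γ` -/
  adj_iff : ∀ g ∈ G, ∀ a b : V, Γ.Adj (g a) (g b) ↔ Γ.Adj a b
  /-- `G` is transitive on the vertices -/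
  vtrans : ∀ a b : V, ∃ g ∈ G, g a = b

/-- The permutation group induced on the neighbourhood of `v` by the elements of `H`
fixing `v` (i.e. `H_v^{Γ(v)}` for `H = G`, and `G_{uv}^{Γ(v)}` for `H = G_u`). -/
def localGroup {V : Type} (Γ : SimpleGraph V) (H : Subgroup (Equiv.Perm V)) (v : V) :
    Subgroup (Equiv.Perm {w : V // Γ.Adj v w}) where
  carrier := {σ | ∃ g ∈ H, g v = v ∧ ∀ w : {w : V // Γ.Adj v w}, (σ w : V) = g (w : V)}
  one_mem' := ⟨1, H.one_mem, rfl, fun _ => rfl⟩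
  mul_mem' := by
    rintro σ τ ⟨g, hg, hgv, hσ⟩ ⟨h, hh, hhv, hτ⟩
    refine ⟨g * h, H.mul_mem hg hh, ?_, fun w => ?_⟩
    · show g (h v) = v
      rw [hhv, hgv]
    · show ((σ (τ w) : V)) = g (h (w : V))
      rw [hσ (τ w), hτ w]
  inv_mem' := by
    rintro σ ⟨g, hg, hgv, hσ⟩
    refine ⟨g⁻¹, H.inv_mem hg, ?_, fun w => ?_⟩
    · exact ((Equiv.Perm.eq_inv_iff_eq).mpr hgv).symm
    · rw [Equiv.Perm.eq_inv_iff_eq]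
      rw [← hσ (σ⁻¹ w), ← Equiv.Perm.mul_apply, mul_inv_cancel, Equiv.Perm.one_apply]

/-- Two permutation groups are permutation isomorphic if some bijection of the underlying
sets carries one onto the other (this yields an isomorphism intertwining the actions). -/
def IsPermIso {α β : Type*} (L : Subgroup (Equiv.Perm α)) (M : Subgroup (Equiv.Perm β)) : Prop :=
  ∃ e : α ≃ β, ∀ σ : Equiv.Perm α, σ ∈ L ↔ e.permCongr σ ∈ M

/-- The pair `(Γ, G)` is locally-`L`: the permutation group induced by a vertex stabiliser
`G_v` on the neighbourhood `Γ(v)` is permutation isomorphic to `L`. -/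
def IsLocally {Ω : Type*} (L : Subgroup (Equiv.Perm Ω)) (P : VTPair) : Prop :=
  ∀ v : P.V, IsPermIso L (localGroup P.Γ P.G v)

/-- The arc-stabiliser `G_{uv} = G_u ∩ G_v`. -/
def arcStab (P : VTPair) (u v : P.V) : Subgroup (Equiv.Perm P.V) :=
  P.G ⊓ MulAction.stabilizer (Equiv.Perm P.V) u ⊓ MulAction.stabilizer (Equiv.Perm P.V) v

/-- A transitive permutation group `L` is graph-restrictive if there is a constant `c`
bounding the order of all arc-stabilisers of locally-`L` pairs. -/
def GraphRestrictive {Ω : Type*} (L : Subgroup (Equiv.Perm Ω)) : Prop :=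
  ∃ c : ℕ, ∀ P : VTPair, IsLocally L P → ∀ u v : P.V, P.Γ.Adj u v →
    Nat.card ↥(arcStab P u v) ≤ c

/-- A transitive permutation group `L` is `p`-graph-restrictive if there is a constant `c`
bounding the largest power of `p` dividing the order of an arc-stabiliser of a locally-`L`
pair. -/
def PGraphRestrictive {Ω : Type*} (p : ℕ) (L : Subgroup (Equiv.Perm Ω)) : Prop :=
  ∃ c : ℕ, ∀ P : VTPair, IsLocally L P → ∀ u v : P.V, P.Γ.Adj u v →
    p ^ ((Nat.card ↥(arcStab P u v)).factorization p) ≤ c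

/-- A permutation group (given as a subgroup of `Equiv.Perm Ω`) is transitive. -/
def IsTransitivePermGroup {Ω : Type*} (N : Subgroup (Equiv.Perm Ω)) : Prop :=
  ∀ x y : Ω, ∃ g ∈ N, g x = y

/-- A permutation group is semiregular if only the identity fixes a point. -/
def IsSemiregularPermGroup {Ω : Type*} (N : Subgroup (Equiv.Perm Ω)) : Prop :=
  ∀ n ∈ N, ∀ x : Ω, n x = x → n = 1

/-- A transitive permutation group is semiprimitive if each of its normal subgroups is
either transitive or semiregular. -/
def IsSemiprimitivePermGroup {Ω : Type*} (L : Subgroup (Equiv.Perm Ω)) : Prop :=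
  IsTransitivePermGroup L ∧
  ∀ N : Subgroup (Equiv.Perm Ω), N ≤ L → (∀ g ∈ L, ∀ n ∈ N, g⁻¹ * n * g ∈ N) →
    IsTransitivePermGroup N ∨ IsSemiregularPermGroup N

/-- The subgroup `G_v^{[1]}` of `G_v` fixing every neighbour of `v`. -/
def fix1 (P : VTPair) (v : P.V) : Subgroup (Equiv.Perm P.V) :=
  P.G ⊓ MulAction.stabilizer (Equiv.Perm P.V) v ⊓
    ⨅ w : {w : P.V // P.Γ.Adj v w}, MulAction.stabilizer (Equiv.Perm P.V) (w : P.V)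

namespace AGR

noncomputable section

open Function Equiv

/-- Context: an amalgam `A ⊇ C ⊆ B` with `|B : C| = 2` and a chosen element
`b0 ∈ B \ C`. -/
structure Ctx (A B C : Type*) [Group A] [Group B] [Group C] where
  iA : C →* A
  iB : C →* B
  hiA : Function.Injective iA
  hiB : Function.Injective iB
  b0 : B
  hb0 : b0 ∉ iB.range
  hindex : iB.range.index = 2

variable {A B C : Type*} [Group A] [Group B] [Group C] (K : Ctx A B C)

/-! ### Two cosets -/

theorem Ctx.mk_ne {b : B} (hb : b ∉ K.iB.range) :
    (QuotientGroup.mk b : B ⧸ K.iB.range) ≠ QuotientGroup.mk (1 : B) := by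
  intro h
  exact hb (by simpa using QuotientGroup.eq.mp h.symm)

theorem Ctx.two {x y : B} (hx : x ∉ K.iB.range) (hy : y ∉ K.iB.range) :
    (QuotientGroup.mk x : B ⧸ K.iB.range) = QuotientGroup.mk y := by
  have h2 : Nat.card (B ⧸ K.iB.range) = 2 := K.hindex
  obtain ⟨z, _, hz⟩ := (Nat.card_eq_two_iff' (QuotientGroup.mk (1:B) : B ⧸ K.iB.range)).mp h2
  rw [hz _ (K.mk_ne hx), hz _ (K.mk_ne hy)]

theorem Ctx.coset_case {b : B} (hb : b ∉ K.iB.range) : K.b0⁻¹ * b ∈ K.iB.range :=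
  QuotientGroup.eq.mp (K.two K.hb0 hb)

theorem Ctx.sq_mem : K.b0 * K.b0 ∈ K.iB.range := by
  by_contra h
  have h2 := K.coset_case h
  have : K.b0 ∈ K.iB.range := by
    have : K.b0⁻¹ * (K.b0 * K.b0) = K.b0 := by group
    rwa [this] at h2
  exact K.hb0 this

theorem Ctx.conj_mem (c : C) : K.b0 * K.iB c * K.b0⁻¹ ∈ K.iB.range := by
  by_contra h
  have h2 := K.coset_case h
  have h3 : K.b0⁻¹ * (K.b0 * K.iB c * K.b0⁻¹) = K.iB c * K.b0⁻¹ := by group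
  rw [h3] at h2
  have h4 : K.b0 ∈ K.iB.range := by
    have h5 : (K.iB c)⁻¹ * (K.iB c * K.b0⁻¹) = K.b0⁻¹ := by group
    have h6 : K.b0⁻¹ ∈ K.iB.range := by
      rw [← h5]; exact Subgroup.mul_mem _ (Subgroup.inv_mem _ ⟨c, rfl⟩) h2
    simpa using Subgroup.inv_mem _ h6
  exact K.hb0 h4

theorem Ctx.conj_mem' (c : C) : K.b0⁻¹ * K.iB c * K.b0 ∈ K.iB.range := by
  by_contra h
  have h2 := K.coset_case h
  have h4 : K.iB c * K.b0 ∈ K.iB.range := by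
    have h5 : (K.b0 * K.b0) * (K.b0⁻¹ * (K.b0⁻¹ * K.iB c * K.b0)) = K.iB c * K.b0 := by group
    rw [← h5]; exact Subgroup.mul_mem _ K.sq_mem h2
  have h6 : K.b0 ∈ K.iB.range := by
    have h7 : (K.iB c)⁻¹ * (K.iB c * K.b0) = K.b0 := by group
    rw [← h7]; exact Subgroup.mul_mem _ (Subgroup.inv_mem _ ⟨c, rfl⟩) h4
  exact K.hb0 h6

/-! ### The twist `phi` -/

def Ctx.phi (c : C) : C := invFun K.iB (K.b0 * K.iB c * K.b0⁻¹)

def Ctx.phi' (c : C) : C := invFun K.iB (K.b0⁻¹ * K.iB c * K.b0)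

def Ctx.c0 : C := invFun K.iB (K.b0 * K.b0)

theorem Ctx.iB_phi (c : C) : K.iB (K.phi c) = K.b0 * K.iB c * K.b0⁻¹ := by
  obtain ⟨d, hd⟩ := K.conj_mem c
  exact invFun_eq ⟨d, hd⟩

theorem Ctx.iB_phi' (c : C) : K.iB (K.phi' c) = K.b0⁻¹ * K.iB c * K.b0 := by
  obtain ⟨d, hd⟩ := K.conj_mem' c
  exact invFun_eq ⟨d, hd⟩

theorem Ctx.iB_c0 : K.iB K.c0 = K.b0 * K.b0 := by
  obtain ⟨d, hd⟩ := K.sq_mem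
  exact invFun_eq ⟨d, hd⟩

theorem Ctx.phi_phi' (c : C) : K.phi (K.phi' c) = c := by
  apply K.hiB; rw [K.iB_phi, K.iB_phi']; group

theorem Ctx.phi'_phi (c : C) : K.phi' (K.phi c) = c := by
  apply K.hiB; rw [K.iB_phi', K.iB_phi]; group

theorem Ctx.phi_mul (c d : C) : K.phi (c * d) = K.phi c * K.phi d := by
  apply K.hiB; rw [map_mul, K.iB_phi, K.iB_phi, K.iB_phi, map_mul]; group

theorem Ctx.phi_inv (c : C) : K.phi c⁻¹ = (K.phi c)⁻¹ := by
  apply K.hiB; rw [map_inv, K.iB_phi, K.iB_phi, map_inv]; group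

theorem Ctx.phi_one : K.phi 1 = 1 := by
  apply K.hiB; rw [K.iB_phi]; simp

theorem Ctx.phi'_one : K.phi' 1 = 1 := by
  apply K.hiB; rw [K.iB_phi']; simp

theorem Ctx.phi_c0 : K.phi K.c0 = K.c0 := by
  apply K.hiB; rw [K.iB_phi, K.iB_c0]; group

theorem Ctx.phi_phi (c : C) : K.phi (K.phi c) = K.c0 * c * K.c0⁻¹ := by
  apply K.hiB
  rw [K.iB_phi, K.iB_phi, map_mul, map_mul, map_inv, K.iB_c0]; group

/-! ### Building blocks for permutation representations -/

def permCongrHom {α β : Type*} (F : α ≃ β) : Perm α →* Perm β :=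
  MonoidHom.mk' (fun p => (F.symm.trans p).trans F) (by
    intro p q; ext x; simp [Equiv.trans_apply, Perm.mul_apply])

theorem permCongrHom_apply {α β : Type*} (F : α ≃ β) (p : Perm α) (x : β) :
    permCongrHom F p x = F (p (F.symm x)) := rfl

theorem permCongrHom_injective {α β : Type*} (F : α ≃ β) :
    Function.Injective (permCongrHom F) := by
  intro p q h
  ext x
  have h2 := congrArg (fun r : Perm β => F.symm (r (F x))) h
  simpa [permCongrHom_apply] using h2

def mulRightHom (A : Type*) [Group A] : A →* Perm A :=
  MonoidHom.mk' (fun a => Equiv.mulRight a⁻¹) (by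
    intro a b; ext v; simp [Perm.mul_apply, mul_assoc])

theorem mulRightHom_apply {A : Type*} [Group A] (a v : A) :
    mulRightHom A a v = v * a⁻¹ := rfl

def permProdLeft {α β : Type*} : Perm α →* Perm (α × β) :=
  MonoidHom.mk' (fun p => Equiv.prodCongr p (Equiv.refl β)) (by
    intro p q; ext x <;> simp [Perm.mul_apply])

/-! ### The permutational product of the doubled amalgam -/

def Ctx.e1 : (A ⧸ K.iA.range) × C ≃ A where
  toFun p := p.1.out * K.iA p.2
  invFun u := (QuotientGroup.mk u,
    invFun K.iA ((QuotientGroup.mk u : A ⧸ K.iA.range).out⁻¹ * u))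
  left_inv := by
    rintro ⟨x, c⟩
    have hmk : (QuotientGroup.mk (x.out * K.iA c) : A ⧸ K.iA.range) = x := by
      rw [QuotientGroup.mk_mul_of_mem x.out (⟨c, rfl⟩ : K.iA c ∈ K.iA.range), QuotientGroup.out_eq']
    refine Prod.ext hmk ?_
    show invFun K.iA _ = c
    rw [hmk, inv_mul_cancel_left]
    exact leftInverse_invFun K.hiA c
  right_inv := by
    intro u
    show _ * K.iA (invFun K.iA _) = u
    have hmem : (QuotientGroup.mk u : A ⧸ K.iA.range).out⁻¹ * u ∈ K.iA.range := by
      have h := QuotientGroup.out_eq' (QuotientGroup.mk u : A ⧸ K.iA.range)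
      exact QuotientGroup.eq.mp h
    obtain ⟨c, hc⟩ := hmem
    rw [invFun_eq ⟨c, hc⟩, mul_inv_cancel_left]

theorem Ctx.e1_apply (x : A ⧸ K.iA.range) (c : C) : K.e1 (x, c) = x.out * K.iA c := rfl

theorem Ctx.e1_symm_fst (u : A) : (K.e1.symm u).1 = QuotientGroup.mk u := rfl

def Ctx.phiE : C ≃ C where
  toFun := K.phi'
  invFun := K.phi
  left_inv := K.phi_phi'
  right_inv := K.phi'_phi

def Ctx.e2 : (A ⧸ K.iA.range) × C ≃ A :=
  (Equiv.prodCongr (Equiv.refl _) K.phiE).trans K.e1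

theorem Ctx.e2_apply (x : A ⧸ K.iA.range) (c : C) :
    K.e2 (x, c) = x.out * K.iA (K.phi' c) := rfl

theorem Ctx.e2_symm_fst (u : A) : (K.e2.symm u).1 = QuotientGroup.mk u := rfl

def Ctx.J1 : ((A ⧸ K.iA.range) × (A ⧸ K.iA.range) × C) ≃ (A × (A ⧸ K.iA.range)) where
  toFun v := (K.e1 (v.1, v.2.2), v.2.1)
  invFun w := ((K.e1.symm w.1).1, w.2, (K.e1.symm w.1).2)
  left_inv := by rintro ⟨x, y, c⟩; simp
  right_inv := by rintro ⟨u, y⟩; simp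

def Ctx.J2 : ((A ⧸ K.iA.range) × (A ⧸ K.iA.range) × C) ≃ (A × (A ⧸ K.iA.range)) where
  toFun v := (K.e2 (v.2.1, v.2.2), v.1)
  invFun w := (w.2, (K.e2.symm w.1).1, (K.e2.symm w.1).2)
  left_inv := by rintro ⟨x, y, c⟩; simp
  right_inv := by rintro ⟨u, y⟩; simp

def Ctx.alpha1 : A →* Perm ((A ⧸ K.iA.range) × (A ⧸ K.iA.range) × C) :=
  (permCongrHom K.J1.symm).comp (permProdLeft.comp (mulRightHom A))

def Ctx.alpha2 : A →* Perm ((A ⧸ K.iA.range) × (A ⧸ K.iA.range) × C) :=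
  (permCongrHom K.J2.symm).comp (permProdLeft.comp (mulRightHom A))

theorem Ctx.alpha1_apply (a : A) (x y : A ⧸ K.iA.range) (c : C) :
    K.alpha1 a (x, y, c) =
      ((K.e1.symm (K.e1 (x, c) * a⁻¹)).1, y, (K.e1.symm (K.e1 (x, c) * a⁻¹)).2) := rfl

theorem Ctx.alpha2_apply (a : A) (x y : A ⧸ K.iA.range) (c : C) :
    K.alpha2 a (x, y, c) =
      (x, (K.e2.symm (K.e2 (y, c) * a⁻¹)).1, (K.e2.symm (K.e2 (y, c) * a⁻¹)).2) := rfl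

theorem Ctx.alpha1_C (c' : C) (x y : A ⧸ K.iA.range) (c : C) :
    K.alpha1 (K.iA c') (x, y, c) = (x, y, c * c'⁻¹) := by
  rw [K.alpha1_apply]
  have h : K.e1 (x, c) * (K.iA c')⁻¹ = K.e1 (x, c * c'⁻¹) := by
    simp [Ctx.e1_apply, map_mul, map_inv, mul_assoc]
  rw [h, K.e1.symm_apply_apply]

theorem Ctx.alpha2_C (c' : C) (x y : A ⧸ K.iA.range) (c : C) :
    K.alpha2 (K.iA c') (x, y, c) = (x, y, c * (K.phi c')⁻¹) := by
  rw [K.alpha2_apply]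
  have h : K.e2 (y, c) * (K.iA c')⁻¹ = K.e2 (y, c * (K.phi c')⁻¹) := by
    have h2 : K.phi' (c * (K.phi c')⁻¹) = K.phi' c * c'⁻¹ := by
      apply K.hiB
      simp only [map_mul, map_inv, K.iB_phi', K.iB_phi]
      group
    simp [Ctx.e2_apply, h2, map_mul, map_inv, mul_assoc]
  rw [h, K.e2.symm_apply_apply]

theorem Ctx.glue (c' : C) : K.alpha2 (K.iA c') = K.alpha1 (K.iA (K.phi c')) := by
  apply Equiv.ext
  rintro ⟨x, y, c⟩
  rw [K.alpha2_C, K.alpha1_C]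

theorem Ctx.out_one_mem :
    (QuotientGroup.mk (1 : A) : A ⧸ K.iA.range).out ∈ K.iA.range := by
  have h := QuotientGroup.eq.mp
    (QuotientGroup.out_eq' (QuotientGroup.mk (1 : A) : A ⧸ K.iA.range))
  simpa using Subgroup.inv_mem _ h

theorem Ctx.mem_range_1 {a a' : A} (h : K.alpha1 a = K.alpha2 a') : a ∈ K.iA.range := by
  have h1 : K.alpha1 a (QuotientGroup.mk 1, QuotientGroup.mk 1, 1)
      = K.alpha2 a' (QuotientGroup.mk 1, QuotientGroup.mk 1, 1) := by rw [h]
  rw [K.alpha1_apply, K.alpha2_apply] at h1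
  have h2 : (QuotientGroup.mk (K.e1 (QuotientGroup.mk 1, 1) * a⁻¹) : A ⧸ K.iA.range)
      = QuotientGroup.mk 1 := by
    have h2' := congrArg Prod.fst h1
    simpa [Ctx.e1_symm_fst] using h2'
  have h3 := QuotientGroup.eq.mp h2
  have hu : (K.e1 (QuotientGroup.mk 1, 1) * a⁻¹)⁻¹ ∈ K.iA.range := by simpa using h3
  have he : K.e1 (QuotientGroup.mk 1, 1) ∈ K.iA.range := by
    rw [Ctx.e1_apply]
    exact Subgroup.mul_mem _ K.out_one_mem ⟨1, rfl⟩
  have hmem := Subgroup.mul_mem _ hu he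
  rwa [show (K.e1 (QuotientGroup.mk 1, 1) * a⁻¹)⁻¹ * K.e1 (QuotientGroup.mk 1, 1) = a
    by group] at hmem

theorem Ctx.mem_range_2 {a a' : A} (h : K.alpha1 a = K.alpha2 a') : a' ∈ K.iA.range := by
  have h1 : K.alpha1 a (QuotientGroup.mk 1, QuotientGroup.mk 1, 1)
      = K.alpha2 a' (QuotientGroup.mk 1, QuotientGroup.mk 1, 1) := by rw [h]
  rw [K.alpha1_apply, K.alpha2_apply] at h1
  have h2 : (QuotientGroup.mk (1:A) : A ⧸ K.iA.range)
      = QuotientGroup.mk (K.e2 (QuotientGroup.mk 1, 1) * a'⁻¹) := by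
    have h2' := congrArg (fun p : (A ⧸ K.iA.range) × (A ⧸ K.iA.range) × C => p.2.1) h1
    simpa [Ctx.e2_symm_fst] using h2'
  have h3 := QuotientGroup.eq.mp h2
  have hu : K.e2 (QuotientGroup.mk 1, 1) * a'⁻¹ ∈ K.iA.range := by simpa using h3
  have he : K.e2 (QuotientGroup.mk 1, 1) ∈ K.iA.range := by
    rw [Ctx.e2_apply]
    exact Subgroup.mul_mem _ K.out_one_mem ⟨_, rfl⟩
  have hmem := Subgroup.mul_mem _ (Subgroup.inv_mem _ he) hu
  rw [show (K.e2 (QuotientGroup.mk 1, 1))⁻¹ * (K.e2 (QuotientGroup.mk 1, 1) * a'⁻¹) = a'⁻¹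
    by group] at hmem
  simpa using Subgroup.inv_mem _ hmem

theorem Ctx.alpha1_injective : Function.Injective K.alpha1 := by
  intro a b hab
  have h1 : K.alpha1 a (QuotientGroup.mk 1, QuotientGroup.mk 1, 1)
      = K.alpha1 b (QuotientGroup.mk 1, QuotientGroup.mk 1, 1) := by rw [hab]
  rw [K.alpha1_apply, K.alpha1_apply] at h1
  have hfst := congrArg Prod.fst h1
  have hsnd := congrArg (fun p : (A ⧸ K.iA.range) × (A ⧸ K.iA.range) × C => p.2.2) h1
  have h2 : K.e1.symm (K.e1 (QuotientGroup.mk 1, 1) * a⁻¹)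
      = K.e1.symm (K.e1 (QuotientGroup.mk 1, 1) * b⁻¹) := Prod.ext hfst hsnd
  have h5 := K.e1.symm.injective h2
  exact inv_injective (mul_left_cancel h5)

/-! ### The doubled representation -/

def Ctx.theta : A →* A :=
  MonoidHom.mk' (fun a => (K.iA K.c0)⁻¹ * a * K.iA K.c0) (by intro a b; group)

theorem Ctx.theta_apply (a : A) : K.theta a = (K.iA K.c0)⁻¹ * a * K.iA K.c0 := rfl

theorem Ctx.theta_C (c : C) : K.theta (K.iA c) = K.iA (K.c0⁻¹ * c * K.c0) := by
  rw [Ctx.theta_apply, map_mul, map_mul, map_inv]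

theorem Ctx.phi_conj (c : C) : K.phi (K.c0⁻¹ * c * K.c0) = K.c0⁻¹ * K.phi c * K.c0 := by
  rw [K.phi_mul, K.phi_mul, K.phi_inv, K.phi_c0]

def sheets {Ω : Type*} (p q : Perm Ω) : Perm (Ω × Bool) where
  toFun v := (cond v.2 (q v.1) (p v.1), v.2)
  invFun v := (cond v.2 (q.symm v.1) (p.symm v.1), v.2)
  left_inv := by rintro ⟨ω, (_ | _)⟩ <;> simp
  right_inv := by rintro ⟨ω, (_ | _)⟩ <;> simp

theorem sheets_mul {Ω : Type*} (p q p' q' : Perm Ω) :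
    sheets p q * sheets p' q' = sheets (p * p') (q * q') := by
  apply Equiv.ext
  rintro ⟨ω, (_ | _)⟩ <;> simp [sheets, Perm.mul_apply]

def Ctx.Ahat : A →* Perm ((((A ⧸ K.iA.range) × (A ⧸ K.iA.range) × C)) × Bool) :=
  MonoidHom.mk' (fun a => sheets (K.alpha1 a) (K.alpha2 (K.theta a))) (by
    intro a b
    simp only [map_mul]
    rw [sheets_mul])

theorem Ctx.Ahat_false (a : A) (ω : (A ⧸ K.iA.range) × (A ⧸ K.iA.range) × C) :
    K.Ahat a (ω, false) = (K.alpha1 a ω, false) := rfl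

theorem Ctx.Ahat_true (a : A) (ω : (A ⧸ K.iA.range) × (A ⧸ K.iA.range) × C) :
    K.Ahat a (ω, true) = (K.alpha2 (K.theta a) ω, true) := rfl

def Ctx.that : Perm ((((A ⧸ K.iA.range) × (A ⧸ K.iA.range) × C)) × Bool) where
  toFun v := cond v.2 (K.alpha1 (K.iA K.c0) v.1, false) (v.1, true)
  invFun v := cond v.2 (v.1, false) ((K.alpha1 (K.iA K.c0)).symm v.1, true)
  left_inv := by rintro ⟨ω, (_ | _)⟩ <;> simp
  right_inv := by rintro ⟨ω, (_ | _)⟩ <;> simp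

theorem Ctx.that_false (ω : (A ⧸ K.iA.range) × (A ⧸ K.iA.range) × C) :
    K.that (ω, false) = (ω, true) := rfl

theorem Ctx.that_true (ω : (A ⧸ K.iA.range) × (A ⧸ K.iA.range) × C) :
    K.that (ω, true) = (K.alpha1 (K.iA K.c0) ω, false) := rfl

theorem Ctx.alpha2_theta_C (c : C) :
    K.alpha2 (K.theta (K.iA c)) = K.alpha1 (K.iA (K.c0⁻¹ * K.phi c * K.c0)) := by
  rw [K.theta_C, K.glue, K.phi_conj]

theorem Ctx.rel_sq : K.that * K.that = K.Ahat (K.iA K.c0) := by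
  apply Equiv.ext
  rintro ⟨ω, (_ | _)⟩
  · show K.that (K.that (ω, false)) = _
    rw [K.that_false, K.that_true, K.Ahat_false]
  · show K.that (K.that (ω, true)) = _
    rw [K.that_true, K.that_false, K.Ahat_true, K.alpha2_theta_C]
    have h : K.c0⁻¹ * K.phi K.c0 * K.c0 = K.c0 := by rw [K.phi_c0]; group
    rw [h]

theorem Ctx.rel_conj (c : C) :
    K.that * K.Ahat (K.iA c) = K.Ahat (K.iA (K.phi c)) * K.that := by
  apply Equiv.ext
  rintro ⟨ω, (_ | _)⟩
  · show K.that (K.Ahat (K.iA c) (ω, false)) = K.Ahat (K.iA (K.phi c)) (K.that (ω, false))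
    rw [K.Ahat_false, K.that_false, K.that_false, K.Ahat_true, K.alpha2_theta_C]
    have h : K.c0⁻¹ * K.phi (K.phi c) * K.c0 = c := by rw [K.phi_phi]; group
    rw [h]
  · show K.that (K.Ahat (K.iA c) (ω, true)) = K.Ahat (K.iA (K.phi c)) (K.that (ω, true))
    rw [K.Ahat_true, K.that_true, K.that_true, K.Ahat_false, K.alpha2_theta_C]
    have h1 : K.alpha1 (K.iA K.c0) (K.alpha1 (K.iA (K.c0⁻¹ * K.phi c * K.c0)) ω)
        = K.alpha1 (K.iA (K.c0 * (K.c0⁻¹ * K.phi c * K.c0))) ω := by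
      rw [← Perm.mul_apply, ← map_mul, ← map_mul]
    have h2 : K.alpha1 (K.iA (K.phi c)) (K.alpha1 (K.iA K.c0) ω)
        = K.alpha1 (K.iA (K.phi c * K.c0)) ω := by
      rw [← Perm.mul_apply, ← map_mul, ← map_mul]
    rw [h1, h2]
    have h3 : K.c0 * (K.c0⁻¹ * K.phi c * K.c0) = K.phi c * K.c0 := by group
    rw [h3]

theorem Ctx.dlem {a a' : A} (h : K.Ahat a * K.that = K.that * K.Ahat a') :
    a ∈ K.iA.range := by
  have hperm : K.alpha1 a' = K.alpha2 (K.theta a) := by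
    apply Equiv.ext
    intro ω
    have h1 : (K.Ahat a * K.that) (ω, false) = (K.that * K.Ahat a') (ω, false) :=
      Equiv.ext_iff.mp h _
    simp only [Perm.mul_apply] at h1
    rw [K.that_false, K.Ahat_true, K.Ahat_false, K.that_false] at h1
    have h2 := congrArg Prod.fst h1
    exact h2.symm
  have h3 : K.theta a ∈ K.iA.range := K.mem_range_2 hperm
  obtain ⟨c, hc⟩ := h3
  refine ⟨K.c0 * c * K.c0⁻¹, ?_⟩
  rw [map_mul, map_mul, map_inv, hc, Ctx.theta_apply]
  group

theorem Ctx.Ahat_injective : Function.Injective K.Ahat := by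
  intro a b hab
  apply K.alpha1_injective
  apply Equiv.ext
  intro ω
  have h1 : K.Ahat a (ω, false) = K.Ahat b (ω, false) := Equiv.ext_iff.mp hab _
  rw [K.Ahat_false, K.Ahat_false] at h1
  exact congrArg Prod.fst h1

theorem Ctx.that_ne_Ahat (a : A) : K.that ≠ K.Ahat a := by
  intro h
  have h1 : K.that ((QuotientGroup.mk 1, QuotientGroup.mk 1, 1), false)
      = K.Ahat a ((QuotientGroup.mk 1, QuotientGroup.mk 1, 1), false) := Equiv.ext_iff.mp h _
  rw [K.that_false, K.Ahat_false] at h1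
  have := congrArg Prod.snd h1
  simp at this

/-! ### Transport to a small universe -/

section FinitePart

variable [Finite A] [Finite C]

abbrev Ctx.Om := (((A ⧸ K.iA.range) × (A ⧸ K.iA.range) × C) × Bool)

abbrev Ctx.OmF := Fin (Nat.card K.Om)

noncomputable def Ctx.F : K.Om ≃ K.OmF := Finite.equivFin _

noncomputable def Ctx.A' : A →* Perm K.OmF := (permCongrHom K.F).comp K.Ahat

noncomputable def Ctx.t' : Perm K.OmF := permCongrHom K.F K.that

theorem Ctx.A'_def (a : A) : K.A' a = permCongrHom K.F (K.Ahat a) := rfl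

theorem Ctx.rel_sq' : K.t' * K.t' = K.A' (K.iA K.c0) := by
  rw [Ctx.A'_def, Ctx.t', ← map_mul, K.rel_sq]

theorem Ctx.rel_conj' (c : C) :
    K.t' * K.A' (K.iA c) = K.A' (K.iA (K.phi c)) * K.t' := by
  rw [Ctx.A'_def, Ctx.A'_def, Ctx.t', ← map_mul, ← map_mul, K.rel_conj]

theorem Ctx.dlem' {a a' : A} (h : K.A' a * K.t' = K.t' * K.A' a') : a ∈ K.iA.range := by
  apply K.dlem (a' := a')
  apply permCongrHom_injective K.F
  rw [map_mul, map_mul]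
  exact h

theorem Ctx.A'_injective : Function.Injective K.A' := fun a b h =>
  K.Ahat_injective (permCongrHom_injective K.F h)

theorem Ctx.t'_ne (a : A) : K.t' ≠ K.A' a := fun h =>
  K.that_ne_Ahat a (permCongrHom_injective K.F h)

/-! ### The group and the graph -/

noncomputable def Ctx.Gbar : Subgroup (Perm K.OmF) :=
  Subgroup.closure ({K.t'} ∪ Set.range K.A')

theorem Ctx.A'_mem (a : A) : K.A' a ∈ K.Gbar :=
  Subgroup.subset_closure (Or.inr ⟨a, rfl⟩)

theorem Ctx.t'_mem : K.t' ∈ K.Gbar :=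
  Subgroup.subset_closure (Or.inl rfl)

noncomputable def Ctx.aG : A →* K.Gbar := K.A'.codRestrict _ K.A'_mem

noncomputable def Ctx.tg : K.Gbar := ⟨K.t', K.t'_mem⟩

theorem Ctx.aG_coe (a : A) : (K.aG a : Perm K.OmF) = K.A' a := rfl

theorem Ctx.aG_injective : Function.Injective K.aG := fun a b h =>
  K.A'_injective (congrArg Subtype.val h)

theorem Ctx.rel_sq_G : K.tg * K.tg = K.aG (K.iA K.c0) := Subtype.ext K.rel_sq'

theorem Ctx.rel_conj_G (c : C) :
    K.tg * K.aG (K.iA c) = K.aG (K.iA (K.phi c)) * K.tg := Subtype.ext (K.rel_conj' c)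

noncomputable def Ctx.Abar : Subgroup K.Gbar := Subgroup.comap K.Gbar.subtype K.A'.range

theorem Ctx.mem_Abar {g : K.Gbar} : g ∈ K.Abar ↔ ∃ a, K.A' a = (g : Perm K.OmF) :=
  Iff.rfl

theorem Ctx.aG_mem_Abar (a : A) : K.aG a ∈ K.Abar := ⟨a, rfl⟩

abbrev Ctx.V := K.Gbar ⧸ K.Abar

noncomputable def Ctx.L : K.Gbar →* Perm K.V := MulAction.toPermHom K.Gbar K.V

theorem Ctx.L_mk (g h : K.Gbar) :
    K.L g (QuotientGroup.mk h) = QuotientGroup.mk (g * h) := by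
  show g • (QuotientGroup.mk h : K.V) = _
  rw [MulAction.Quotient.smul_mk]
  rfl

def Ctx.Adj (u w : K.V) : Prop :=
  (∃ g : K.Gbar, u = QuotientGroup.mk g ∧ w = QuotientGroup.mk (g * K.tg)) ∨
  (∃ g : K.Gbar, w = QuotientGroup.mk g ∧ u = QuotientGroup.mk (g * K.tg))

theorem Ctx.adj_norm {u w : K.V} : K.Adj u w ↔
    ∃ g : K.Gbar, u = QuotientGroup.mk g ∧ w = QuotientGroup.mk (g * K.tg) := by
  constructor
  · rintro (h | ⟨g, hw, hu⟩)
    · exact h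
    · refine ⟨g * K.tg * (K.aG (K.iA K.c0))⁻¹, ?_, ?_⟩
      · rw [hu]
        apply QuotientGroup.eq.mpr
        have : (g * K.tg)⁻¹ * (g * K.tg * (K.aG (K.iA K.c0))⁻¹) = (K.aG (K.iA K.c0))⁻¹ := by
          group
        rw [this]
        exact Subgroup.inv_mem _ (K.aG_mem_Abar _)
      · rw [hw]
        congr 1
        rw [← K.rel_sq_G]
        group
  · exact Or.inl

theorem Ctx.adj_symm : Symmetric K.Adj := fun u w h => h.elim Or.inr Or.inl

theorem Ctx.adj_irrefl (u : K.V) : ¬ K.Adj u u := by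
  intro h
  obtain ⟨g, hu, hu'⟩ := K.adj_norm.mp h
  have h1 := QuotientGroup.eq.mp (hu ▸ hu' : (QuotientGroup.mk g : K.V) = _)
  rw [inv_mul_cancel_left] at h1
  obtain ⟨a, ha⟩ := K.mem_Abar.mp h1
  exact K.t'_ne a ha.symm

noncomputable def Ctx.Graph : SimpleGraph K.V where
  Adj := K.Adj
  symm := ⟨fun u w h => K.adj_symm h⟩
  loopless := ⟨fun u h => K.adj_irrefl u h⟩

theorem Ctx.adj_mul_left (g : K.Gbar) {u w : K.V} (h : K.Graph.Adj u w) :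
    K.Graph.Adj (K.L g u) (K.L g w) := by
  obtain ⟨h0, hu, hw⟩ := K.adj_norm.mp h
  apply K.adj_norm.mpr
  refine ⟨g * h0, ?_, ?_⟩
  · rw [hu, K.L_mk]
  · rw [hw, K.L_mk, mul_assoc]

theorem Ctx.adj_iff_G (σ : Perm K.V) (hσ : σ ∈ K.L.range) (u w : K.V) :
    K.Graph.Adj (σ u) (σ w) ↔ K.Graph.Adj u w := by
  obtain ⟨g, rfl⟩ := hσ
  constructor
  · intro h
    have h2 := K.adj_mul_left g⁻¹ h
    rw [← Perm.mul_apply, ← Perm.mul_apply, ← map_mul, inv_mul_cancel, map_one,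
      Perm.one_apply, Perm.one_apply] at h2
    exact h2
  · exact K.adj_mul_left g

theorem Ctx.vtrans (u w : K.V) : ∃ σ ∈ K.L.range, σ u = w := by
  obtain ⟨gu, rfl⟩ := QuotientGroup.mk_surjective u
  obtain ⟨gw, rfl⟩ := QuotientGroup.mk_surjective w
  refine ⟨K.L (gw * gu⁻¹), ⟨_, rfl⟩, ?_⟩
  rw [K.L_mk, inv_mul_cancel_right]

/-! ### Connectivity -/

theorem Ctx.mk_mul_Abar (h z : K.Gbar) (hz : z ∈ K.Abar) :
    (QuotientGroup.mk (h * z) : K.V) = QuotientGroup.mk h := by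
  apply QuotientGroup.eq.mpr
  have heq : (h * z)⁻¹ * h = z⁻¹ := by group
  rw [heq]
  exact Subgroup.inv_mem _ hz

theorem Ctx.reachable_all (x : Perm K.OmF) (hx : x ∈ K.Gbar) :
    ∀ z : K.Gbar, (z : Perm K.OmF) = x → ∀ h : K.Gbar,
      K.Graph.Reachable (QuotientGroup.mk h) (QuotientGroup.mk (h * z)) := by
  refine Subgroup.closure_induction (p := fun y _ => ∀ z : K.Gbar, (z : Perm K.OmF) = y →
      ∀ h : K.Gbar, K.Graph.Reachable (QuotientGroup.mk h) (QuotientGroup.mk (h * z)))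
    ?_ ?_ ?_ ?_ hx
  · rintro y (rfl | ⟨a, rfl⟩) z hzy h
    · have hz : z = K.tg := Subtype.ext (by rw [hzy]; rfl)
      rw [hz]
      have hadj : K.Graph.Adj (QuotientGroup.mk h) (QuotientGroup.mk (h * K.tg)) :=
        K.adj_norm.mpr ⟨h, rfl, rfl⟩
      exact hadj.reachable
    · have hz : z ∈ K.Abar := K.mem_Abar.mpr ⟨a, hzy.symm⟩
      rw [K.mk_mul_Abar h z hz]
  · intro z hz h
    have h1 : z = 1 := Subtype.ext (by rw [hz]; rfl)
    rw [h1, mul_one]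
  · intro y y' hy hy' py py' z hz h
    have h1 := py ⟨y, hy⟩ rfl h
    have h2 := py' ⟨y', hy'⟩ rfl (h * ⟨y, hy⟩)
    have h3 : z = ⟨y, hy⟩ * ⟨y', hy'⟩ := Subtype.ext hz
    rw [h3, ← mul_assoc]
    exact h1.trans h2
  · intro y hy py z hz h
    have h1 := py ⟨y, hy⟩ rfl (h * z)
    have h3 : h * z * ⟨y, hy⟩ = h := by
      apply Subtype.ext
      simp only [Subgroup.coe_mul, hz]
      group
    rw [h3] at h1
    exact h1.symm

theorem Ctx.reachable_mul (g h : K.Gbar) :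
    K.Graph.Reachable (QuotientGroup.mk h) (QuotientGroup.mk (h * g)) :=
  K.reachable_all (g : Perm K.OmF) g.2 g rfl h

theorem Ctx.conn : K.Graph.Connected := by
  have hne : Nonempty K.V := ⟨QuotientGroup.mk 1⟩
  rw [SimpleGraph.connected_iff]
  refine ⟨?_, hne⟩
  intro u w
  obtain ⟨gu, rfl⟩ := QuotientGroup.mk_surjective u
  obtain ⟨gw, rfl⟩ := QuotientGroup.mk_surjective w
  have h1 := K.reachable_mul (gu⁻¹ * gw) gu
  rwa [mul_inv_cancel_left] at h1

/-! ### Triviality of the kernel -/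

noncomputable def Ctx.NN : Subgroup C :=
  Subgroup.comap (K.A'.comp K.iA) (Subgroup.map K.Gbar.subtype K.L.ker)

theorem Ctx.mem_NN {c : C} :
    c ∈ K.NN ↔ ∃ k ∈ K.L.ker, (k : Perm K.OmF) = K.A' (K.iA c) := by
  constructor
  · rintro ⟨k, hk, hkc⟩
    exact ⟨k, hk, hkc⟩
  · rintro ⟨k, hk, hkc⟩
    exact ⟨k, hk, hkc⟩

theorem Ctx.ker_elt {k : K.Gbar} (hk : k ∈ K.L.ker) :
    ∃ c : C, (k : Perm K.OmF) = K.A' (K.iA c) ∧ c ∈ K.NN := by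
  have h1 : K.L k = 1 := hk
  have hv0 : K.L k (QuotientGroup.mk 1) = QuotientGroup.mk 1 := by rw [h1]; rfl
  rw [K.L_mk, mul_one] at hv0
  have hk1 : k ∈ K.Abar := by
    have h2 := QuotientGroup.eq.mp hv0
    simpa using Subgroup.inv_mem _ h2
  obtain ⟨a, ha⟩ := K.mem_Abar.mp hk1
  have hv1 : K.L k (QuotientGroup.mk K.tg) = QuotientGroup.mk K.tg := by rw [h1]; rfl
  rw [K.L_mk] at hv1
  have h3 := QuotientGroup.eq.mp hv1
  have h4 : K.tg⁻¹ * k * K.tg ∈ K.Abar := by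
    have h5 : ((k * K.tg)⁻¹ * K.tg)⁻¹ = K.tg⁻¹ * k * K.tg := by group
    rw [← h5]
    exact Subgroup.inv_mem _ h3
  obtain ⟨a', ha'⟩ := K.mem_Abar.mp h4
  have h6 : K.A' a * K.t' = K.t' * K.A' a' := by
    have h7 : (K.tg⁻¹ * k * K.tg : K.Gbar).1 = K.t'⁻¹ * (k : Perm K.OmF) * K.t' := rfl
    rw [h7] at ha'
    rw [ha, ha']
    group
  have h8 : a ∈ K.iA.range := K.dlem' h6
  obtain ⟨c, hc⟩ := h8
  refine ⟨c, by rw [hc, ha], ?_⟩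
  exact K.mem_NN.mpr ⟨k, hk, by rw [hc, ha]⟩

theorem Ctx.NN_phi {c : C} (hc : c ∈ K.NN) : K.phi c ∈ K.NN := by
  obtain ⟨k, hk, hkc⟩ := K.mem_NN.mp hc
  have hk2 : K.tg * k * K.tg⁻¹ ∈ K.L.ker := (MonoidHom.normal_ker K.L).conj_mem k hk K.tg
  refine K.mem_NN.mpr ⟨K.tg * k * K.tg⁻¹, hk2, ?_⟩
  show K.t' * (k : Perm K.OmF) * K.t'⁻¹ = _
  rw [hkc]
  have h1 := K.rel_conj' c
  calc K.t' * K.A' (K.iA c) * K.t'⁻¹ = K.A' (K.iA (K.phi c)) * K.t' * K.t'⁻¹ := by rw [h1]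
  _ = K.A' (K.iA (K.phi c)) := by group

theorem Ctx.NN_conj (a : A) {c : C} (hc : c ∈ K.NN) :
    ∃ c' ∈ K.NN, K.iA c' = a * K.iA c * a⁻¹ := by
  obtain ⟨k, hk, hkc⟩ := K.mem_NN.mp hc
  have hk2 : K.aG a * k * (K.aG a)⁻¹ ∈ K.L.ker :=
    (MonoidHom.normal_ker K.L).conj_mem k hk (K.aG a)
  obtain ⟨c', hc'1, hc'2⟩ := K.ker_elt hk2
  refine ⟨c', hc'2, ?_⟩
  apply K.A'_injective
  rw [← hc'1]
  have hcoe : ((K.aG a * k * (K.aG a)⁻¹ : K.Gbar) : Perm K.OmF)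
      = K.A' a * (k : Perm K.OmF) * (K.A' a)⁻¹ := rfl
  rw [hcoe, hkc, ← map_inv, ← map_mul, ← map_mul]

theorem Ctx.NN_mem_conj (d : C) {c : C} (hc : c ∈ K.NN) : d * c * d⁻¹ ∈ K.NN := by
  obtain ⟨c', hc'N, hc'⟩ := K.NN_conj (K.iA d) hc
  have : c' = d * c * d⁻¹ := by
    apply K.hiA
    rw [hc', map_mul, map_mul, map_inv]
  rwa [← this]

theorem Ctx.mapA_normal : (Subgroup.map K.iA K.NN).Normal := by
  constructor
  rintro n ⟨c, hc, rfl⟩ g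
  obtain ⟨c', hc'N, hc'⟩ := K.NN_conj g hc
  exact ⟨c', hc'N, hc'⟩

theorem Ctx.mapB_normal : (Subgroup.map K.iB K.NN).Normal := by
  constructor
  rintro n ⟨c, hc, rfl⟩ g
  by_cases hg : g ∈ K.iB.range
  · obtain ⟨d, rfl⟩ := hg
    refine ⟨d * c * d⁻¹, K.NN_mem_conj d hc, ?_⟩
    rw [map_mul, map_mul, map_inv]
  · obtain ⟨d, hd⟩ := K.coset_case hg
    have hgd : g = K.b0 * K.iB d := by rw [hd, mul_inv_cancel_left]
    refine ⟨K.phi (d * c * d⁻¹), K.NN_phi (K.NN_mem_conj d hc), ?_⟩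
    rw [K.iB_phi, hgd, map_mul, map_mul, map_inv]
    group

theorem Ctx.L_injective
    (hcommon : ∀ N : Subgroup C, (Subgroup.map K.iA N).Normal →
      (Subgroup.map K.iB N).Normal → N = ⊥) :
    Function.Injective K.L := by
  rw [← MonoidHom.ker_eq_bot_iff]
  have hNN : K.NN = ⊥ := hcommon K.NN K.mapA_normal K.mapB_normal
  rw [eq_bot_iff]
  intro k hk
  obtain ⟨c, hc1, hc2⟩ := K.ker_elt hk
  rw [hNN] at hc2
  rw [Subgroup.mem_bot] at hc2 ⊢
  apply Subtype.ext
  rw [hc1, hc2, map_one, map_one]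
  rfl

/-! ### The vertex stabiliser -/

def Ctx.v0 : K.V := QuotientGroup.mk 1

theorem Ctx.mk_eq_v0 {g : K.Gbar} (hg : g ∈ K.Abar) :
    (QuotientGroup.mk g : K.V) = K.v0 := by
  apply QuotientGroup.eq.mpr
  simpa using Subgroup.inv_mem _ hg

noncomputable def Ctx.Theta :
    A →* ↥(K.L.range ⊓ MulAction.stabilizer (Perm K.V) K.v0) :=
  MonoidHom.codRestrict (K.L.comp K.aG) _ (fun a => by
    refine Subgroup.mem_inf.mpr ⟨⟨K.aG a, rfl⟩, ?_⟩
    rw [MulAction.mem_stabilizer_iff]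
    show K.L (K.aG a) K.v0 = K.v0
    show K.L (K.aG a) (QuotientGroup.mk 1) = K.v0
    rw [K.L_mk, mul_one]
    exact K.mk_eq_v0 (K.aG_mem_Abar a))

theorem Ctx.Theta_coe (a : A) : (K.Theta a : Perm K.V) = K.L (K.aG a) := rfl

theorem Ctx.Theta_bijective
    (hcommon : ∀ N : Subgroup C, (Subgroup.map K.iA N).Normal →
      (Subgroup.map K.iB N).Normal → N = ⊥) :
    Function.Bijective K.Theta := by
  constructor
  · intro a b hab
    have h1 : K.L (K.aG a) = K.L (K.aG b) := congrArg Subtype.val hab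
    exact K.aG_injective (K.L_injective hcommon h1)
  · rintro ⟨σ, hσ⟩
    obtain ⟨⟨g, rfl⟩, hst⟩ := Subgroup.mem_inf.mp hσ
    have h1 : K.L g K.v0 = K.v0 := hst
    have h2 : K.L g (QuotientGroup.mk 1) = QuotientGroup.mk 1 := h1
    rw [K.L_mk, mul_one] at h2
    have h3 : g ∈ K.Abar := by
      simpa using Subgroup.inv_mem _ (QuotientGroup.eq.mp h2)
    obtain ⟨a, ha⟩ := K.mem_Abar.mp h3
    refine ⟨a, ?_⟩
    apply Subtype.ext
    rw [K.Theta_coe]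
    congr 1
    exact Subtype.ext ha

/-! ### The neighbourhood of the base vertex -/

theorem Ctx.tg_conj (c : C) :
    K.tg⁻¹ * K.aG (K.iA c) * K.tg = K.aG (K.iA (K.phi' c)) := by
  have h := K.rel_conj_G (K.phi' c)
  rw [K.phi_phi'] at h
  rw [mul_assoc, ← h, inv_mul_cancel_left]

noncomputable def Ctx.eta : A ⧸ K.iA.range → K.V :=
  Quotient.lift (fun a => (QuotientGroup.mk (K.aG a * K.tg) : K.V)) (by
    intro a b hab
    have hab2 : a⁻¹ * b ∈ K.iA.range := QuotientGroup.leftRel_apply.mp hab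
    obtain ⟨c, hc⟩ := hab2
    apply Quotient.sound
    apply QuotientGroup.leftRel_apply.mpr
    have hb : b = a * K.iA c := by rw [hc, mul_inv_cancel_left]
    have h1 : (K.aG a * K.tg)⁻¹ * (K.aG b * K.tg)
        = K.tg⁻¹ * K.aG (K.iA c) * K.tg := by
      rw [hb, map_mul]
      group
    rw [h1, K.tg_conj]
    exact K.aG_mem_Abar _)

theorem Ctx.eta_mk (a : A) :
    K.eta (QuotientGroup.mk a) = QuotientGroup.mk (K.aG a * K.tg) := rfl

theorem Ctx.eta_injective : Function.Injective K.eta := by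
  intro x y
  refine Quotient.inductionOn₂ x y ?_
  intro a b h
  have h1 : (QuotientGroup.mk (K.aG a * K.tg) : K.V) = QuotientGroup.mk (K.aG b * K.tg) := h
  have h2 := QuotientGroup.eq.mp h1
  have h3 : (K.aG a * K.tg)⁻¹ * (K.aG b * K.tg) = K.tg⁻¹ * K.aG (a⁻¹ * b) * K.tg := by
    rw [map_mul, map_inv]
    group
  rw [h3] at h2
  obtain ⟨u, hu⟩ := K.mem_Abar.mp h2
  have h4 : K.A' (a⁻¹ * b) * K.t' = K.t' * K.A' u := by
    have h5 : ((K.tg⁻¹ * K.aG (a⁻¹ * b) * K.tg : K.Gbar) : Perm K.OmF)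
        = K.t'⁻¹ * K.A' (a⁻¹ * b) * K.t' := rfl
    rw [h5] at hu
    rw [hu]
    group
  have h6 : a⁻¹ * b ∈ K.iA.range := K.dlem' h4
  exact Quotient.sound (QuotientGroup.leftRel_apply.mpr h6)

theorem Ctx.adj_v0 {w : K.V} : K.Graph.Adj K.v0 w ↔ ∃ x, K.eta x = w := by
  constructor
  · intro h
    obtain ⟨g, hv, hw⟩ := K.adj_norm.mp h
    have h3 : g ∈ K.Abar := by
      simpa using Subgroup.inv_mem _ (QuotientGroup.eq.mp hv.symm)
    obtain ⟨a, ha⟩ := K.mem_Abar.mp h3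
    refine ⟨QuotientGroup.mk a, ?_⟩
    rw [K.eta_mk, hw]
    congr 2
    exact Subtype.ext ha
  · rintro ⟨x, rfl⟩
    refine Quotient.inductionOn x ?_
    intro a
    apply K.adj_norm.mpr
    exact ⟨K.aG a, (K.mk_eq_v0 (K.aG_mem_Abar a)).symm, rfl⟩

noncomputable def Ctx.etaN : (A ⧸ K.iA.range) → {w : K.V // K.Graph.Adj K.v0 w} :=
  fun x => ⟨K.eta x, K.adj_v0.mpr ⟨x, rfl⟩⟩

theorem Ctx.etaN_bijective : Function.Bijective K.etaN := by
  constructor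
  · intro x y h
    exact K.eta_injective (congrArg Subtype.val h)
  · rintro ⟨w, hw⟩
    obtain ⟨x, hx⟩ := K.adj_v0.mp hw
    exact ⟨x, Subtype.ext hx⟩

end FinitePart

end

theorem smul_quot {A : Type*} [Group A] (H : Subgroup A) (a b : A) :
    a • (QuotientGroup.mk b : A ⧸ H) = QuotientGroup.mk (a * b) := by
  rw [MulAction.Quotient.smul_mk]
  rfl

end AGR

/-- **Lemma.** Let `A`, `B`, `C` be finite groups with `C = A ∩ B` (given by embeddings of
`C` into `A` and `B`) and `|B : C| = 2`. If the trivial group is the only subgroup of `C`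
normal in both `A` and `B`, then there is a finite group `Ḡ` and a connected
`Ḡ`-arc-transitive graph `Γ` such that the stabiliser `Ḡ_v` of a vertex `v` is isomorphic
to `A`, and the action of `Ḡ_v` on `Γ(v)` is permutation isomorphic to the action of `A`
on the cosets of `C` in `A`. -/




theorem amalgam_graph_realization {A B C : Type*} [Group A] [Group B] [Group C]
    [Finite A] [Finite B] [Finite C]
    (iA : C →* A) (iB : C →* B)
    (hiA : Function.Injective iA) (hiB : Function.Injective iB)
    (hindex : iB.range.index = 2)
    (hcommon : ∀ N : Subgroup C, (Subgroup.map iA N).Normal →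
      (Subgroup.map iB N).Normal → N = ⊥) :
    ∃ P : VTPair,
      (∀ u v u' v' : P.V, P.Γ.Adj u v → P.Γ.Adj u' v' →
        ∃ g ∈ P.G, g u = u' ∧ g v = v') ∧
      ∃ v : P.V,
        ∃ ψ : ↥(P.G ⊓ MulAction.stabilizer (Equiv.Perm P.V) v) ≃* A,
          ∃ e : {w : P.V // P.Γ.Adj v w} ≃ (A ⧸ iA.range),
            ∀ (g : Equiv.Perm P.V)
              (hg : g ∈ P.G ⊓ MulAction.stabilizer (Equiv.Perm P.V) v)
              (w w' : {w : P.V // P.Γ.Adj v w}),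
                g (w : P.V) = (w' : P.V) → e w' = ψ ⟨g, hg⟩ • e w := by
  classical
  have hne : iB.range ≠ ⊤ := by
    intro h
    rw [h, Subgroup.index_top] at hindex
    exact absurd hindex (by norm_num)
  obtain ⟨b₀, hb0⟩ : ∃ b, b ∉ iB.range := by
    by_contra h
    push_neg at h
    exact hne ((Subgroup.eq_top_iff' iB.range).mpr h)
  set K : AGR.Ctx A B C := ⟨iA, iB, hiA, hiB, b₀, hb0, hindex⟩ with hK
  refine ⟨{ V := K.V,
            fintypeV := Fintype.ofFinite _,
            Γ := K.Graph,
            conn := K.conn,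
            G := K.L.range,
            adj_iff := K.adj_iff_G,
            vtrans := K.vtrans }, ?_, ?_⟩
  · intro u v u' v' huv huv'
    obtain ⟨g, rfl, rfl⟩ := K.adj_norm.mp huv
    obtain ⟨g', rfl, rfl⟩ := K.adj_norm.mp huv'
    refine ⟨K.L (g' * g⁻¹), ⟨_, rfl⟩, ?_, ?_⟩
    · rw [K.L_mk]
      congr 1
      group
    · rw [K.L_mk]
      congr 1
      group
  · refine ⟨K.v0, ?_⟩
    have hbij := K.Theta_bijective hcommon
    set E := MulEquiv.ofBijective K.Theta hbij with hE
    set E0 := Equiv.ofBijective K.etaN K.etaN_bijective with hE0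
    refine ⟨E.symm, E0.symm, ?_⟩
    intro g hg w w' hww'
    set a : A := E.symm ⟨g, hg⟩ with ha
    have hTa : K.Theta a = ⟨g, hg⟩ := E.apply_symm_apply ⟨g, hg⟩
    have hg_eq : g = K.L (K.aG a) := by
      have h1 := congrArg Subtype.val hTa
      rw [K.Theta_coe] at h1
      exact h1.symm
    have hw_eta : (w : K.V) = K.eta (E0.symm w) := by
      have h1 : E0 (E0.symm w) = w := E0.apply_symm_apply w
      exact (congrArg Subtype.val h1).symm
    have hw'_eta : (w' : K.V) = K.eta (E0.symm w') := by
      have h1 : E0 (E0.symm w') = w' := E0.apply_symm_apply w'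
      exact (congrArg Subtype.val h1).symm
    obtain ⟨a₁, ha₁⟩ := QuotientGroup.mk_surjective (E0.symm w)
    have hcomp : g (w : K.V) = K.eta (a • E0.symm w) := by
      rw [hg_eq, hw_eta, ← ha₁, K.eta_mk, K.L_mk, AGR.smul_quot, K.eta_mk]
      congr 1
      rw [map_mul, mul_assoc]
    have h9 : K.eta (E0.symm w') = K.eta (a • E0.symm w) := by
      rw [← hw'_eta, ← hww', hcomp]
    exact K.eta_injective h9
end

section
/- Let (Γ,G) be a locally-transitive pair and let (u,v) be an arc of Γ. If G_{uv}^{[1]} is a non-trivial p-group for some prime p, then O_p(G_{uv}^{Γ(u)}) ≠ 1; that is, the permutation group induced by G_{uv} on Γ(u) has a non-trivial normal p-subgroup. -/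
theorem Equiv.Perm.apply_inv_self {α : Type*} (f : Equiv.Perm α) (x : α) : f (f⁻¹ x) = x :=
  (Equiv.eq_symm_apply f).mp rfl

theorem Equiv.Perm.inv_apply_self {α : Type*} (f : Equiv.Perm α) (x : α) : f⁻¹ (f x) = x :=
  Equiv.Perm.inv_eq_iff_eq.mpr rfl

namespace OpAux

open Equiv Pointwise

lemma mem_localGroup {V : Type} {Γ : SimpleGraph V} {H : Subgroup (Equiv.Perm V)} {v : V}
    {σ : Equiv.Perm {w : V // Γ.Adj v w}} :
    σ ∈ localGroup Γ H v ↔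
      ∃ g ∈ H, g v = v ∧ ∀ w : {w : V // Γ.Adj v w}, (σ w : V) = g (w : V) :=
  Iff.rfl

lemma localGroup_mono {V : Type} {Γ : SimpleGraph V} {H₁ H₂ : Subgroup (Equiv.Perm V)}
    (h : H₁ ≤ H₂) (v : V) : localGroup Γ H₁ v ≤ localGroup Γ H₂ v := by
  rintro σ ⟨g, hg, hgv, hpt⟩
  exact ⟨g, h hg, hgv, hpt⟩

variable (P : VTPair)

lemma mem_fix1 {a : P.V} {g : Equiv.Perm P.V} :
    g ∈ fix1 P a ↔ g ∈ P.G ∧ g a = a ∧ ∀ w : P.V, P.Γ.Adj a w → g w = w := by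
  simp only [fix1, Subgroup.mem_inf, Subgroup.mem_iInf, MulAction.mem_stabilizer_iff,
    Equiv.Perm.smul_def]
  constructor
  · rintro ⟨⟨h1, h2⟩, h3⟩
    exact ⟨h1, h2, fun w hw => h3 ⟨w, hw⟩⟩
  · rintro ⟨h1, h2, h3⟩
    exact ⟨⟨h1, h2⟩, fun w => h3 w w.2⟩

lemma conj_mem_fix1 {a : P.V} {g x : Equiv.Perm P.V} (hg : g ∈ P.G) (hx : x ∈ fix1 P a) :
    g * x * g⁻¹ ∈ fix1 P (g a) := by
  rw [mem_fix1] at hx ⊢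
  obtain ⟨hxG, hxa, hxw⟩ := hx
  refine ⟨P.G.mul_mem (P.G.mul_mem hg hxG) (P.G.inv_mem hg), ?_, ?_⟩
  · simp [Equiv.Perm.mul_apply, hxa]
  · intro w hw
    have h1 : P.Γ.Adj a (g⁻¹ w) := by
      have h2 := P.adj_iff g hg a (g⁻¹ w)
      rw [Equiv.Perm.apply_inv_self] at h2
      exact h2.mp hw
    rw [Equiv.Perm.mul_apply, Equiv.Perm.mul_apply, hxw _ h1, Equiv.Perm.apply_inv_self]

lemma arc_trans (hloc : ∀ v : P.V, IsTransitivePermGroup (localGroup P.Γ P.G v))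
    {a b c d : P.V} (hab : P.Γ.Adj a b) (hcd : P.Γ.Adj c d) :
    ∃ g ∈ P.G, g a = c ∧ g b = d := by
  obtain ⟨g₁, hg₁, hg₁a⟩ := P.vtrans a c
  have hadj : P.Γ.Adj c (g₁ b) := by
    have h2 := P.adj_iff g₁ hg₁ a b
    rw [hg₁a] at h2
    exact h2.mpr hab
  obtain ⟨σ, hσ, hσeq⟩ := hloc c ⟨g₁ b, hadj⟩ ⟨d, hcd⟩
  obtain ⟨g₂, hg₂, hg₂c, hpt⟩ := hσ
  refine ⟨g₂ * g₁, P.G.mul_mem hg₂ hg₁, ?_, ?_⟩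
  · simp [Equiv.Perm.mul_apply, hg₁a, hg₂c]
  · have h3 := hpt ⟨g₁ b, hadj⟩
    rw [hσeq] at h3
    simpa [Equiv.Perm.mul_apply] using h3.symm

lemma isPGroup_of_conj {p : ℕ} {H K : Subgroup (Equiv.Perm P.V)} (c : Equiv.Perm P.V)
    (hH : IsPGroup p ↥H) (hc : ∀ x ∈ K, c * x * c⁻¹ ∈ H) : IsPGroup p ↥K := by
  intro x
  obtain ⟨n, hn⟩ := hH ⟨c * ↑x * c⁻¹, hc ↑x x.2⟩
  refine ⟨n, ?_⟩
  have h1 : (c * (↑x : Equiv.Perm P.V) * c⁻¹) ^ p ^ n = 1 := by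
    have := congrArg (Subgroup.subtype H) hn
    simpa using this
  rw [conj_pow] at h1
  have h2 : (↑x : Equiv.Perm P.V) ^ p ^ n = 1 := by
    have h3 := congrArg (fun y => c⁻¹ * y * c) h1
    simpa [mul_assoc] using h3
  exact Subtype.ext (by simpa using h2)

lemma pow_pt {V : Type} {Γ : SimpleGraph V} {v : V} {σ : Equiv.Perm {w : V // Γ.Adj v w}}
    {g : Equiv.Perm V} (hpt : ∀ w : {w : V // Γ.Adj v w}, ((σ w : V)) = g (w : V)) :
    ∀ (m : ℕ) (w : {w : V // Γ.Adj v w}), (((σ ^ m) w : V)) = (g ^ m) (w : V) := by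
  intro m
  induction m with
  | zero => intro w; simp
  | succ n ih =>
    intro w
    rw [pow_succ, pow_succ]
    calc (((σ ^ n * σ) w : V)) = (((σ ^ n) (σ w) : V)) := by rw [Equiv.Perm.mul_apply]
    _ = (g ^ n) ((σ w : V)) := ih (σ w)
    _ = (g ^ n) (g (w : V)) := by rw [hpt w]
    _ = (g ^ n * g) (w : V) := by rw [Equiv.Perm.mul_apply]

lemma isPGroup_localGroup {p : ℕ} {V : Type} {Γ : SimpleGraph V}
    {H : Subgroup (Equiv.Perm V)} (hH : IsPGroup p ↥H) (v : V) :
    IsPGroup p ↥(localGroup Γ H v) := by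
  intro σ
  obtain ⟨g, hgH, hgv, hpt⟩ := σ.2
  obtain ⟨n, hn⟩ := hH ⟨g, hgH⟩
  have hg1 : g ^ p ^ n = 1 := by
    have := congrArg (Subgroup.subtype H) hn
    simpa using this
  refine ⟨n, ?_⟩
  have h1 : (σ : Equiv.Perm {w : V // Γ.Adj v w}) ^ p ^ n = 1 := by
    ext w
    have h2 := pow_pt hpt (p ^ n) w
    rw [hg1] at h2
    simpa using h2
  exact Subtype.ext (by simpa using h1)

/-- The family of normal `p`-subgroups of `G_a^{[1]}`. -/
def pFam (p : ℕ) (a : P.V) : Set (Subgroup (Equiv.Perm P.V)) :=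
  {N | N ≤ fix1 P a ∧ IsPGroup p ↥N ∧ ∀ g ∈ fix1 P a, ∀ n ∈ N, g * n * g⁻¹ ∈ N}

/-- The `p`-core `O_p(G_a^{[1]})`, as a subgroup of `Perm V`. -/
def OpV (p : ℕ) (a : P.V) : Subgroup (Equiv.Perm P.V) := sSup (pFam P p a)

lemma OpV_le_fix1 (p : ℕ) (a : P.V) : OpV P p a ≤ fix1 P a :=
  sSup_le fun _ hN => hN.1

lemma isPGroup_OpV (p : ℕ) (hp : p.Prime) (a : P.V) : IsPGroup p ↥(OpV P p a) := by
  classical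
  haveI := P.fintypeV
  haveI := Fact.mk hp
  obtain ⟨S⟩ : Nonempty (Sylow p ↥(fix1 P a)) := inferInstance
  have hle : OpV P p a ≤ (S : Subgroup ↥(fix1 P a)).map (fix1 P a).subtype := by
    refine sSup_le fun N hN => ?_
    obtain ⟨hNle, hNp, hNnorm⟩ := hN
    have hN'p : IsPGroup p ↥(N.subgroupOf (fix1 P a)) :=
      hNp.of_equiv (Subgroup.subgroupOfEquivOfLe hNle).symm
    have hN'normal : (N.subgroupOf (fix1 P a)).Normal := by
      constructor
      intro n hn g
      rw [Subgroup.mem_subgroupOf] at hn ⊢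
      simpa using hNnorm ↑g g.2 ↑n hn
    obtain ⟨S₀, hS₀⟩ := hN'p.exists_le_sylow
    obtain ⟨g, hg⟩ := MulAction.exists_smul_eq ↥(fix1 P a) S₀ S
    intro x hx
    have hx' : (⟨x, hNle hx⟩ : ↥(fix1 P a)) ∈ N.subgroupOf (fix1 P a) := by
      rw [Subgroup.mem_subgroupOf]; exact hx
    have hconj : g⁻¹ * ⟨x, hNle hx⟩ * g ∈ N.subgroupOf (fix1 P a) := by
      simpa using hN'normal.conj_mem _ hx' g⁻¹
    have hS : (⟨x, hNle hx⟩ : ↥(fix1 P a)) ∈ S := by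
      rw [← hg]
      have hmem2 : (⟨x, hNle hx⟩ : ↥(fix1 P a)) ∈
          MulAut.conj g • (S₀ : Subgroup ↥(fix1 P a)) := by
        rw [Subgroup.mem_pointwise_smul_iff_inv_smul_mem]
        refine hS₀ ?_
        simpa [MulAut.smul_def] using hconj
      exact hmem2
    exact ⟨⟨x, hNle hx⟩, hS, rfl⟩
  exact (S.isPGroup'.map (fix1 P a).subtype).to_le hle

lemma conj_OpV_le (p : ℕ) {a : P.V} {h : Equiv.Perm P.V} (hhG : h ∈ P.G) (hha : h a = a) :
    ∀ x ∈ OpV P p a, h * x * h⁻¹ ∈ OpV P p a := by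
  have hinva : h⁻¹ a = a := h.injective (by rw [Equiv.Perm.apply_inv_self, hha])
  have key : ∀ N ∈ pFam P p a,
      N.map (MulAut.conj h).toMonoidHom ∈ pFam P p a := by
    rintro N ⟨hle, hpN, hnorm⟩
    refine ⟨?_, hpN.map _, ?_⟩
    · rintro y ⟨n, hn, rfl⟩
      have h2 := conj_mem_fix1 P hhG (hle hn)
      rw [hha] at h2
      simpa [MulAut.conj_apply] using h2
    · rintro g hg y ⟨n, hn, rfl⟩
      have hg' : h⁻¹ * g * h ∈ fix1 P a := by
        have h2 := conj_mem_fix1 P (P.G.inv_mem hhG) hg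
        rwa [hinva, inv_inv] at h2
      refine ⟨(h⁻¹ * g * h) * n * (h⁻¹ * g * h)⁻¹, hnorm _ hg' n hn, ?_⟩
      simp only [MulEquiv.coe_toMonoidHom, MulAut.conj_apply]
      group
  have hmain : OpV P p a ≤ (OpV P p a).comap (MulAut.conj h).toMonoidHom := by
    refine sSup_le fun N hN => Subgroup.map_le_iff_le_comap.mp (le_sSup (key N hN))
  intro x hx
  have := hmain hx
  rw [Subgroup.mem_comap] at this
  simpa [MulAut.conj_apply] using this

/-- congruence of permutation groups as a `MulEquiv`. -/
def permCongrMulEquiv {α β : Type*} (e : α ≃ β) : Equiv.Perm α ≃* Equiv.Perm β :=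
  { e.permCongr with
    map_mul' := fun σ τ => Equiv.ext fun x => by
      simp [Equiv.permCongr_apply, Equiv.Perm.mul_apply] }

lemma localGroup_transport {g : Equiv.Perm P.V} (hgG : g ∈ P.G) {a b c d : P.V}
    (hga : g a = c) (hgb : g b = d)
    (e : {w : P.V // P.Γ.Adj b w} ≃ {w : P.V // P.Γ.Adj d w})
    (he : ∀ w : {w : P.V // P.Γ.Adj b w}, ((e w : P.V)) = g (w : P.V))
    {σ : Equiv.Perm {w : P.V // P.Γ.Adj b w}}
    (hσ : σ ∈ localGroup P.Γ (P.G ⊓ MulAction.stabilizer (Equiv.Perm P.V) a) b) :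
    e.permCongr σ ∈ localGroup P.Γ (P.G ⊓ MulAction.stabilizer (Equiv.Perm P.V) c) d := by
  obtain ⟨h, hh, hhb, hpt⟩ := hσ
  rw [Subgroup.mem_inf] at hh
  have hha : h a = a := hh.2
  have hinvc : g⁻¹ c = a := g.injective (by rw [Equiv.Perm.apply_inv_self, hga])
  have hinvd : g⁻¹ d = b := g.injective (by rw [Equiv.Perm.apply_inv_self, hgb])
  have hesymm : ∀ w : {w : P.V // P.Γ.Adj d w}, ((e.symm w : P.V)) = g⁻¹ (w : P.V) := by
    intro w
    have h2 := he (e.symm w)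
    rw [Equiv.apply_symm_apply] at h2
    exact g.injective (by rw [Equiv.Perm.apply_inv_self, h2])
  refine ⟨g * h * g⁻¹, ?_, ?_, ?_⟩
  · rw [Subgroup.mem_inf]
    refine ⟨P.G.mul_mem (P.G.mul_mem hgG hh.1) (P.G.inv_mem hgG), ?_⟩
    show (g * h * g⁻¹) • c = c
    simp [Equiv.Perm.smul_def, Equiv.Perm.mul_apply, hinvc, hha, hga]
  · simp [Equiv.Perm.mul_apply, hinvd, hhb, hgb]
  · intro w
    calc ((e.permCongr σ w : P.V)) = ((e (σ (e.symm w)) : P.V)) := by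
            rw [Equiv.permCongr_apply]
    _ = g ((σ (e.symm w) : P.V)) := he _
    _ = g (h ((e.symm w : P.V))) := by rw [hpt]
    _ = g (h (g⁻¹ (w : P.V))) := by rw [hesymm]
    _ = (g * h * g⁻¹) (w : P.V) := by simp [Equiv.Perm.mul_apply]

end OpAux

/-- **Lemma.** Let `(Γ,G)` be a locally-transitive pair and `(u,v)` an arc of `Γ`. If
`G_{uv}^{[1]}` is a non-trivial `p`-group, then `O_p(G_{uv}^{Γ(u)}) ≠ 1`, i.e. the
permutation group induced by `G_{uv}` on `Γ(u)` has a non-trivial normal `p`-subgroup. -/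
theorem Op_ne_one_of_arc_kernel_pGroup (P : VTPair)
    (hloc : ∀ v : P.V, IsTransitivePermGroup (localGroup P.Γ P.G v))
    (u v : P.V) (huv : P.Γ.Adj u v) (p : ℕ) (hp : p.Prime)
    (hpgrp : IsPGroup p ↥(fix1 P u ⊓ fix1 P v))
    (hnt : fix1 P u ⊓ fix1 P v ≠ ⊥) :
    ∃ Q : Subgroup (Equiv.Perm {w : P.V // P.Γ.Adj u w}),
      Q ≠ ⊥ ∧ IsPGroup p ↥Q ∧
      Q ≤ localGroup P.Γ (P.G ⊓ MulAction.stabilizer (Equiv.Perm P.V) v) u ∧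
      ∀ g ∈ localGroup P.Γ (P.G ⊓ MulAction.stabilizer (Equiv.Perm P.V) v) u,
        ∀ q ∈ Q, g⁻¹ * q * g ∈ Q := by
  classical
  haveI := P.fintypeV
  by_contra hcon
  -- Transported hypothesis: for every arc (a,b), every normal p-subgroup of the local
  -- group at b is trivial.
  have key : ∀ a b : P.V, P.Γ.Adj a b →
      ∀ Q' : Subgroup (Equiv.Perm {w : P.V // P.Γ.Adj b w}),
        IsPGroup p ↥Q' →
        Q' ≤ localGroup P.Γ (P.G ⊓ MulAction.stabilizer (Equiv.Perm P.V) a) b →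
        (∀ g ∈ localGroup P.Γ (P.G ⊓ MulAction.stabilizer (Equiv.Perm P.V) a) b,
          ∀ q ∈ Q', g⁻¹ * q * g ∈ Q') → Q' = ⊥ := by
    intro a b hab Q' hQp hQle hQnorm
    by_contra hQne
    obtain ⟨g, hgG, hgb, hga⟩ := OpAux.arc_trans P hloc hab.symm huv
    have hadj1 : ∀ w : P.V, P.Γ.Adj b w → P.Γ.Adj u (g w) := by
      intro w hw
      have h2 := P.adj_iff g hgG b w
      rw [hgb] at h2
      exact h2.mpr hw
    have hadj2 : ∀ w : P.V, P.Γ.Adj u w → P.Γ.Adj b (g⁻¹ w) := by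
      intro w hw
      have h2 := P.adj_iff g hgG b (g⁻¹ w)
      rw [hgb, Equiv.Perm.apply_inv_self] at h2
      exact h2.mp hw
    let e : {w : P.V // P.Γ.Adj b w} ≃ {w : P.V // P.Γ.Adj u w} :=
      { toFun := fun w => ⟨g w, hadj1 w w.2⟩
        invFun := fun w => ⟨g⁻¹ w, hadj2 w w.2⟩
        left_inv := fun w => Subtype.ext (Equiv.Perm.inv_apply_self g w)
        right_inv := fun w => Subtype.ext (Equiv.Perm.apply_inv_self g w) }
    have he : ∀ w : {w : P.V // P.Γ.Adj b w}, ((e w : P.V)) = g (w : P.V) := fun _ => rfl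
    have hesymm : ∀ w : {w : P.V // P.Γ.Adj u w}, ((e.symm w : P.V)) = g⁻¹ (w : P.V) :=
      fun _ => rfl
    let Φ := OpAux.permCongrMulEquiv e
    have hΦapp : ∀ σ, Φ σ = e.permCongr σ := fun _ => rfl
    have hΦsymm : ∀ τ, Φ.symm τ = e.symm.permCongr τ := fun τ => by
      rw [← Equiv.permCongr_symm]; rfl
    refine hcon ⟨Q'.map Φ.toMonoidHom, ?_, hQp.map _, ?_, ?_⟩
    · rw [Ne, Subgroup.map_eq_bot_iff_of_injective _ Φ.injective]
      exact hQne
    · rintro σ ⟨σ', hσ', rfl⟩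
      exact OpAux.localGroup_transport P hgG hga hgb e he (hQle hσ')
    · intro τ hτ q hq
      rw [Subgroup.mem_map] at hq
      obtain ⟨σ', hσ', rfl⟩ := hq
      have hτ' : Φ.symm τ ∈
          localGroup P.Γ (P.G ⊓ MulAction.stabilizer (Equiv.Perm P.V) a) b := by
        rw [hΦsymm]
        have h2 := OpAux.localGroup_transport P (P.G.inv_mem hgG)
          (show g⁻¹ v = a from g.injective (by rw [Equiv.Perm.apply_inv_self, hga]))
          (show g⁻¹ u = b from g.injective (by rw [Equiv.Perm.apply_inv_self, hgb]))
          e.symm hesymm hτ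
        exact h2
      have h3 := hQnorm (Φ.symm τ) hτ' σ' hσ'
      have h4 : τ⁻¹ * Φ.toMonoidHom σ' * τ =
          Φ.toMonoidHom ((Φ.symm τ)⁻¹ * σ' * (Φ.symm τ)) := by
        simp only [map_mul, map_inv, MulEquiv.coe_toMonoidHom, MulEquiv.apply_symm_apply]
      rw [h4]
      exact Subgroup.mem_map.mpr ⟨_, h3, rfl⟩
  -- The p-core of G_a^{[1]} acts trivially on the neighbourhood of each neighbour b of a.
  have hOple : ∀ a b : P.V, P.Γ.Adj a b → OpAux.OpV P p a ≤ fix1 P b := by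
    intro a b hab
    have hQb : localGroup P.Γ (OpAux.OpV P p a) b = ⊥ := by
      refine key a b hab _ (OpAux.isPGroup_localGroup (OpAux.isPGroup_OpV P p hp a) b)
        (OpAux.localGroup_mono (le_trans (OpAux.OpV_le_fix1 P p a) inf_le_left) b) ?_
      intro τ hτ σ hσ
      obtain ⟨h, hh, hhb, hτpt⟩ := hτ
      obtain ⟨x, hxOp, hxb, hσpt⟩ := hσ
      rw [Subgroup.mem_inf] at hh
      have hha : h a = a := hh.2
      have hinva : h⁻¹ a = a := h.injective (by rw [Equiv.Perm.apply_inv_self, hha])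
      have hxmem : h⁻¹ * x * h ∈ OpAux.OpV P p a := by
        have h2 := OpAux.conj_OpV_le P p (P.G.inv_mem hh.1) hinva x hxOp
        rwa [inv_inv] at h2
      have hxa : ∀ w : P.V, P.Γ.Adj a w → x w = w := by
        have h2 := OpAux.OpV_le_fix1 P p a hxOp
        rw [OpAux.mem_fix1] at h2
        exact h2.2.2
      have hτinv : ∀ y : {w : P.V // P.Γ.Adj b w}, ((τ⁻¹ y : P.V)) = h⁻¹ (y : P.V) := by
        intro y
        have h2 := hτpt (τ⁻¹ y)
        rw [Equiv.Perm.apply_inv_self] at h2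
        exact h.injective (by rw [Equiv.Perm.apply_inv_self, h2])
      refine ⟨h⁻¹ * x * h, hxmem, ?_, ?_⟩
      · simp [Equiv.Perm.mul_apply, hhb, hxa b hab,
          show h⁻¹ b = b from h.injective (by rw [Equiv.Perm.apply_inv_self, hhb])]
      · intro w
        calc (((τ⁻¹ * σ * τ) w : P.V)) = ((τ⁻¹ (σ (τ w)) : P.V)) := by
              simp [Equiv.Perm.mul_apply]
        _ = h⁻¹ ((σ (τ w) : P.V)) := hτinv _
        _ = h⁻¹ (x ((τ w : P.V))) := by rw [hσpt]
        _ = h⁻¹ (x (h (w : P.V))) := by rw [hτpt]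
        _ = (h⁻¹ * x * h) (w : P.V) := by simp [Equiv.Perm.mul_apply]
    intro x hx
    have hxfix := OpAux.OpV_le_fix1 P p a hx
    rw [OpAux.mem_fix1] at hxfix
    obtain ⟨hxG, -, hxw⟩ := hxfix
    have hxb : x b = b := hxw b hab
    have hpred : ∀ w : P.V, P.Γ.Adj b w ↔ P.Γ.Adj b (x w) := by
      intro w
      have h2 := P.adj_iff x hxG b w
      rw [hxb] at h2
      exact h2.symm
    have hmem : x.subtypePerm (fun w => (hpred w).symm) ∈ localGroup P.Γ (OpAux.OpV P p a) b :=
      ⟨x, hx, hxb, fun w => rfl⟩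
    rw [hQb, Subgroup.mem_bot] at hmem
    rw [OpAux.mem_fix1]
    refine ⟨hxG, hxb, fun w hw => ?_⟩
    have h3 := congrArg (fun σ : Equiv.Perm {w : P.V // P.Γ.Adj b w} => (σ ⟨w, hw⟩ : P.V)) hmem
    simpa [Equiv.Perm.subtypePerm_apply] using h3
  -- Each arc kernel equals the p-core of the corresponding vertex kernel.
  have hFab : ∀ a b : P.V, P.Γ.Adj a b → fix1 P a ⊓ fix1 P b = OpAux.OpV P p a := by
    intro a b hab
    refine le_antisymm (le_sSup ?_) (le_inf (OpAux.OpV_le_fix1 P p a) (hOple a b hab))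
    refine ⟨inf_le_left, ?_, ?_⟩
    · obtain ⟨g, hgG, hga, hgb⟩ := OpAux.arc_trans P hloc hab huv
      refine OpAux.isPGroup_of_conj P g hpgrp ?_
      intro x hx
      rw [Subgroup.mem_inf] at hx ⊢
      constructor
      · have h2 := OpAux.conj_mem_fix1 P hgG hx.1
        rwa [hga] at h2
      · have h2 := OpAux.conj_mem_fix1 P hgG hx.2
        rwa [hgb] at h2
    · intro gg hgg n hn
      have hggm := hgg
      rw [OpAux.mem_fix1] at hggm
      obtain ⟨hggG, hgga, hggw⟩ := hggm
      rw [Subgroup.mem_inf] at hn ⊢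
      constructor
      · have h2 := OpAux.conj_mem_fix1 P hggG hn.1
        rwa [hgga] at h2
      · have h2 := OpAux.conj_mem_fix1 P hggG hn.2
        rwa [hggw b hab] at h2
  -- Propagate constancy of arc kernels along walks.
  have hbase : ∀ x : P.V, P.Γ.Adj v x →
      fix1 P v ⊓ fix1 P x = fix1 P u ⊓ fix1 P v := by
    intro x hvx
    rw [hFab v x hvx, ← hFab v u huv.symm, inf_comm]
  have hstep : ∀ a : P.V,
      (∀ x, P.Γ.Adj a x → fix1 P a ⊓ fix1 P x = fix1 P u ⊓ fix1 P v) →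
      ∀ b, P.Γ.Adj a b →
      ∀ x, P.Γ.Adj b x → fix1 P b ⊓ fix1 P x = fix1 P u ⊓ fix1 P v := by
    intro a ha b hab x hbx
    rw [hFab b x hbx, ← hFab b a hab.symm, inf_comm, ha b hab]
  have hwalk : ∀ (a w : P.V), P.Γ.Walk a w →
      (∀ x, P.Γ.Adj a x → fix1 P a ⊓ fix1 P x = fix1 P u ⊓ fix1 P v) →
      (∀ x, P.Γ.Adj w x → fix1 P w ⊓ fix1 P x = fix1 P u ⊓ fix1 P v) := by
    intro a w q
    induction q with
    | nil => exact fun h => h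
    | @cons a' c' w' h q ih => exact fun ha => ih (hstep a' ha c' h)
  have hall : ∀ w x : P.V, P.Γ.Adj w x →
      fix1 P w ⊓ fix1 P x = fix1 P u ⊓ fix1 P v := by
    intro w x hwx
    obtain ⟨q⟩ := P.conn.preconnected v w
    exact hwalk v w q hbase x hwx
  -- The arc kernel fixes every vertex, hence is trivial: contradiction.
  apply hnt
  rw [eq_bot_iff]
  intro k hk
  rw [Subgroup.mem_bot]
  ext w
  have hnbr : ∃ x, P.Γ.Adj w x := by
    by_cases hwu : w = u
    · exact ⟨v, hwu ▸ huv⟩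
    · obtain ⟨q⟩ := P.conn.preconnected w u
      cases q with
      | nil => exact absurd rfl hwu
      | cons h _ => exact ⟨_, h⟩
  obtain ⟨x, hwx⟩ := hnbr
  have hkw : k ∈ fix1 P w ⊓ fix1 P x := by rw [hall w x hwx]; exact hk
  have h2 := (Subgroup.mem_inf.mp hkw).1
  rw [OpAux.mem_fix1] at h2
  simpa using h2.2.1
end
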